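/- arXiv:1305.1342 — 9 statements merged into one kernel-verified Lean document; each statement's English description precedes it below -/
import Mathlib

section
/- Let H_A, H_B, H_C be finite-dimensional complex Hilbert spaces. For any trace-one Hermitian operators Q_AB on H_A ⊗ H_B and Q_AC on H_A ⊗ H_C satisfying the consistency condition Tr_B[Q_AB] = Tr_C[Q_AC], there exists a trace-one Hermitian operator Q_ABC on H_A ⊗ H_B ⊗ H_C such that the partial trace of Q_ABC over H_C equals Q_AB and the partial trace of Q_ABC over H_B equals Q_AC. -/
open Matrix

noncomputable section

/-- Partial trace over the second tensor factor. -/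
def trSnd {A B : Type*} [Fintype B] (Q : Matrix (A × B) (A × B) ℂ) : Matrix A A ℂ :=
  fun a a' => ∑ b : B, Q (a, b) (a', b)

/-- Partial trace of a tripartite operator over the third factor. -/
def trC3 {A B C : Type*} [Fintype C] (w : Matrix (A × B × C) (A × B × C) ℂ) :
    Matrix (A × B) (A × B) ℂ :=
  fun p q => ∑ c : C, w (p.1, p.2, c) (q.1, q.2, c)

/-- Partial trace of a tripartite operator over the second factor. -/
def trB3 {A B C : Type*} [Fintype B] (w : Matrix (A × B × C) (A × B × C) ℂ) :
    Matrix (A × C) (A × C) ℂ :=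
  fun p q => ∑ b : B, w (p.1, b, p.2) (q.1, b, q.2)

lemma trSnd_herm {A B : Type*} [Fintype B] {Q : Matrix (A × B) (A × B) ℂ}
    (h : Q.IsHermitian) (a a' : A) :
    star (trSnd Q a' a) = trSnd Q a a' := by
  unfold trSnd
  rw [star_sum]
  exact Finset.sum_congr rfl fun b _ => h.apply (a, b) (a', b)

lemma trSnd_trace {A B : Type*} [Fintype A] [Fintype B] (Q : Matrix (A × B) (A × B) ℂ) :
    (trSnd Q).trace = Q.trace := by
  simp [Matrix.trace, trSnd, Matrix.diag, Fintype.sum_prod_type]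

theorem hermitian_trace_one_extension
    {A B C : Type*} [Fintype A] [DecidableEq A] [Fintype B] [DecidableEq B]
    [Fintype C] [DecidableEq C]
    (QAB : Matrix (A × B) (A × B) ℂ) (QAC : Matrix (A × C) (A × C) ℂ)
    (hABherm : QAB.IsHermitian) (hACherm : QAC.IsHermitian)
    (hABtr : QAB.trace = 1) (hACtr : QAC.trace = 1)
    (hcons : trSnd QAB = trSnd QAC) :
    ∃ QABC : Matrix (A × B × C) (A × B × C) ℂ,
      QABC.IsHermitian ∧ QABC.trace = 1 ∧ trC3 QABC = QAB ∧ trB3 QABC = QAC := by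
  have hB : Nonempty (A × B) := by
    by_contra h
    rw [not_nonempty_iff] at h
    simp [Matrix.trace] at hABtr
  have hC : Nonempty (A × C) := by
    by_contra h
    rw [not_nonempty_iff] at h
    simp [Matrix.trace] at hACtr
  obtain ⟨-, b0⟩ := hB.some
  obtain ⟨-, c0⟩ := hC.some
  refine ⟨fun p q =>
      (if p.2.2 = c0 ∧ q.2.2 = c0 then QAB (p.1, p.2.1) (q.1, q.2.1) else 0)
    + (if p.2.1 = b0 ∧ q.2.1 = b0 then QAC (p.1, p.2.2) (q.1, q.2.2) else 0)
    - (if (p.2.1 = b0 ∧ p.2.2 = c0) ∧ (q.2.1 = b0 ∧ q.2.2 = c0)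
        then trSnd QAB p.1 q.1 else 0), ?_, ?_, ?_, ?_⟩
  · refine Matrix.IsHermitian.ext fun p q => ?_
    simp only [conjTranspose_apply, star_sub, star_add,
      apply_ite (star : ℂ → ℂ), star_zero]
    congr 1
    · congr 1
      · exact if_congr and_comm (hABherm.apply _ _) rfl
      · exact if_congr and_comm (hACherm.apply _ _) rfl
    · exact if_congr and_comm (trSnd_herm hABherm _ _) rfl
  · have h1 : (trSnd QAB).trace = 1 := by rw [trSnd_trace]; exact hABtr
    simp only [Matrix.trace, Matrix.diag, Fintype.sum_prod_type]
    simp only [Finset.sum_sub_distrib, Finset.sum_add_distrib, and_self]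
    have hS1 : (∑ a : A, ∑ b : B, ∑ c : C, if c = c0 then QAB (a, b) (a, b) else 0) = 1 := by
      simpa [Matrix.trace, Matrix.diag, Fintype.sum_prod_type, Finset.sum_ite_eq'] using hABtr
    have hS2 : (∑ a : A, ∑ b : B, ∑ c : C, if b = b0 then QAC (a, c) (a, c) else 0) = 1 := by
      rw [Finset.sum_congr rfl fun a _ => Finset.sum_comm]
      simpa [Matrix.trace, Matrix.diag, Fintype.sum_prod_type, Finset.sum_ite_eq'] using hACtr
    have hS3 : (∑ a : A, ∑ b : B, ∑ c : C, if b = b0 ∧ c = c0 then trSnd QAB a a else 0) = 1 := by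
      simpa [Matrix.trace, Matrix.diag, ite_and, Finset.sum_ite_eq'] using h1
    rw [hS1, hS2, hS3]
    ring
  · ext p q
    simp only [trC3, Finset.sum_sub_distrib, Finset.sum_add_distrib]
    have e1 : ∑ c : C, (if c = c0 ∧ c = c0 then QAB (p.1, p.2) (q.1, q.2) else 0)
        = QAB p q := by simp [Finset.sum_ite_eq']
    have e2 : ∑ c : C, (if p.2 = b0 ∧ q.2 = b0 then QAC (p.1, c) (q.1, c) else 0)
        = if p.2 = b0 ∧ q.2 = b0 then trSnd QAC p.1 q.1 else 0 := by
      split <;> simp [trSnd]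
    have e3 : ∑ c : C, (if (p.2 = b0 ∧ c = c0) ∧ (q.2 = b0 ∧ c = c0)
        then trSnd QAB p.1 q.1 else 0)
        = if p.2 = b0 ∧ q.2 = b0 then trSnd QAB p.1 q.1 else 0 := by
      by_cases h : p.2 = b0 ∧ q.2 = b0
      · simp [h.1, h.2, Finset.sum_ite_eq']
      · simp only [h, if_false]
        apply Finset.sum_eq_zero
        intro c _
        rw [if_neg (by tauto)]
    rw [e1, e2, e3, hcons]
    ring
  · ext p q
    simp only [trB3, Finset.sum_sub_distrib, Finset.sum_add_distrib]
    have e1 : ∑ b : B, (if p.2 = c0 ∧ q.2 = c0 then QAB (p.1, b) (q.1, b) else 0)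
        = if p.2 = c0 ∧ q.2 = c0 then trSnd QAB p.1 q.1 else 0 := by
      split <;> simp [trSnd]
    have e2 : ∑ b : B, (if b = b0 ∧ b = b0 then QAC (p.1, p.2) (q.1, q.2) else 0)
        = QAC p q := by simp [Finset.sum_ite_eq']
    have e3 : ∑ b : B, (if (b = b0 ∧ p.2 = c0) ∧ (b = b0 ∧ q.2 = c0)
        then trSnd QAB p.1 q.1 else 0)
        = if p.2 = c0 ∧ q.2 = c0 then trSnd QAB p.1 q.1 else 0 := by
      by_cases h : p.2 = c0 ∧ q.2 = c0
      · simp [h, Finset.sum_ite_eq']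
      · simp only [h, if_false]
        apply Finset.sum_eq_zero
        intro b _
        rw [if_neg (by tauto)]
    rw [e1, e2, e3]
    ring
end
end

section
/- Let |0⟩, |1⟩ be the standard basis of ℂ² and |±⟩ = (|0⟩ ± |1⟩)/√2. Define the two-qubit density operators ρ_AB = (1/2)(|+⟩⟨+| ⊗ |+⟩⟨+| + |−⟩⟨−| ⊗ |−⟩⟨−|) and ρ_AC = (1/2)(|0⟩⟨0| ⊗ |0⟩⟨0| + |1⟩⟨1| ⊗ |1⟩⟨1|). Then there exists no density operator w on ℂ² ⊗ ℂ² ⊗ ℂ² (factors A, B, C) whose partial trace over the third factor equals ρ_AB and whose partial trace over the second factor equals ρ_AC; i.e., these two zero-discord (classical-quantum) states are not joinable, even though their reduced states on A agree. -/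
open Matrix Kronecker
open scoped ComplexOrder

noncomputable section

/-- A density operator: positive semidefinite with trace one. -/
def IsDensity {n : Type*} [Fintype n] (M : Matrix n n ℂ) : Prop :=
  M.PosSemidef ∧ M.trace = 1

/-- The projector `|+⟩⟨+|` on a qubit. -/
def plusProj : Matrix (Fin 2) (Fin 2) ℂ := fun _ _ => 1 / 2

/-- The projector `|−⟩⟨−|` on a qubit. -/
def minusProj : Matrix (Fin 2) (Fin 2) ℂ := fun i j => (-1 : ℂ) ^ (i.val + j.val) / 2

/-- `ρ_AB = (|+⟩⟨+| ⊗ |+⟩⟨+| + |−⟩⟨−| ⊗ |−⟩⟨−|)/2`. -/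
def rhoAB : Matrix (Fin 2 × Fin 2) (Fin 2 × Fin 2) ℂ :=
  (1 / 2 : ℂ) • (plusProj ⊗ₖ plusProj + minusProj ⊗ₖ minusProj)

/-- `ρ_AC = (|00⟩⟨00| + |11⟩⟨11|)/2`. -/
def rhoAC : Matrix (Fin 2 × Fin 2) (Fin 2 × Fin 2) ℂ :=
  fun p q => if p = q ∧ p.1 = p.2 then 1 / 2 else 0

/-- In a PSD matrix, a zero diagonal entry forces the whole row and column to vanish. -/
lemma psd_row_zero {n : Type*} [Fintype n] {M : Matrix n n ℂ} (hM : M.PosSemidef)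
    {i : n} (hi : M i i = 0) (j : n) : M i j = 0 ∧ M j i = 0 := by
  obtain ⟨B, rfl⟩ : ∃ B : Matrix n n ℂ, M = Bᴴ * B := by
    classical
    open scoped MatrixOrder in
    obtain ⟨X, hX, -, hXX⟩ := CFC.exists_sqrt_of_isSelfAdjoint_of_quasispectrumRestricts
      hM.isHermitian (QuasispectrumRestricts.nnreal_of_nonneg hM.nonneg)
    exact ⟨X, by rw [← hXX]; congr 1; exact hX.star_eq.symm⟩
  have hcol : ∀ k, B k i = 0 := by
    have h0 : ∑ k, star (B k i) * B k i = 0 := by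
      simpa [Matrix.mul_apply, Matrix.conjTranspose_apply] using hi
    intro k
    have := (Finset.sum_eq_zero_iff_of_nonneg
      (fun k _ => star_mul_self_nonneg (B k i))).mp h0 k (Finset.mem_univ k)
    simpa using this
  constructor <;> simp [Matrix.mul_apply, Matrix.conjTranspose_apply, hcol]

theorem classical_quantum_states_not_joinable :
    ¬ ∃ w : Matrix (Fin 2 × Fin 2 × Fin 2) (Fin 2 × Fin 2 × Fin 2) ℂ,
        IsDensity w ∧ trC3 w = rhoAB ∧ trB3 w = rhoAC := by
  rintro ⟨w, ⟨hpsd, -⟩, hAB, hAC⟩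
  -- diagonal entries with a ≠ c vanish
  have hdiag : ∀ a b c : Fin 2, a ≠ c → w (a, b, c) (a, b, c) = 0 := by
    intro a b c hac
    have hsum : ∑ b : Fin 2, w (a, b, c) (a, b, c) = 0 := by
      have := congrFun (congrFun hAC (a, c)) (a, c)
      simpa [trB3, rhoAC, hac] using this
    have hnn : ∀ b : Fin 2, 0 ≤ w (a, b, c) (a, b, c) := by
      intro b
      have := hpsd.2 (Finsupp.single (a, b, c) 1)
      simpa [dotProduct, Matrix.mulVec, Finset.sum_ite_eq,
        Finset.sum_ite_eq'] using this
    exact (Finset.sum_eq_zero_iff_of_nonneg (fun b _ => hnn b)).mp hsum b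
      (Finset.mem_univ b)
  have h1 : w ((0 : Fin 2), (0 : Fin 2), (0 : Fin 2)) (1, 1, 0) = 0 :=
    (psd_row_zero hpsd (hdiag 1 1 0 (by decide)) _).2
  have h2 : w ((0 : Fin 2), (0 : Fin 2), (1 : Fin 2)) (1, 1, 1) = 0 :=
    (psd_row_zero hpsd (hdiag 0 0 1 (by decide)) _).1
  have := congrFun (congrFun hAB ((0 : Fin 2), (0 : Fin 2))) (1, 1)
  rw [show trC3 w (0, 0) (1, 1) = 0 by
    show (∑ c : Fin 2, w (0, 0, c) (1, 1, c)) = 0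
    rw [Fin.sum_univ_two, h1, h2, add_zero]] at this
  have : (0 : ℂ) = 1 / 4 := by
    rw [this]
    simp [rhoAB, plusProj, minusProj, Matrix.kroneckerMap_apply]
    norm_num
  norm_num at this
end
end

section
/- Let ρ be a density operator on H_L ⊗ H_R and let M be a channel of the form M(ρ) = Σ_i λ_i (U_i ⊗ V_i) ρ (U_i ⊗ V_i)†, where λ_i ≥ 0, Σ_i λ_i = 1, each U_i is a unitary on H_L, and each V_i is a unitary on H_R. If ρ is m-n sharable, then M(ρ) is m-n sharable. -/
open Matrix Kronecker
open scoped ComplexOrder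

noncomputable section

/-- The reduced state of `w` on the `i`-th left factor and the `j`-th right factor,
obtained as the partial trace over all the other factors. -/
def pairReduce {L R : Type*} [Fintype L] [DecidableEq L] [Fintype R] [DecidableEq R]
    {m n : ℕ} (w : Matrix ((Fin m → L) × (Fin n → R)) ((Fin m → L) × (Fin n → R)) ℂ)
    (i : Fin m) (j : Fin n) : Matrix (L × R) (L × R) ℂ :=
  fun p q => ∑ f : Fin m → L, ∑ g : Fin n → R,
    if f i = p.1 ∧ g j = p.2 then
      w (f, g) (Function.update f i q.1, Function.update g j q.2)
    else 0

/-- `ρ` is `m`-`n` sharable if some density operator on `m` left copies and `n` right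
copies reduces to `ρ` on every left-right pair. -/
def Sharable {L R : Type*} [Fintype L] [DecidableEq L] [Fintype R] [DecidableEq R]
    (m n : ℕ) (ρ : Matrix (L × R) (L × R) ℂ) : Prop :=
  ∃ w : Matrix ((Fin m → L) × (Fin n → R)) ((Fin m → L) × (Fin n → R)) ℂ,
    IsDensity w ∧ ∀ (i : Fin m) (j : Fin n), pairReduce w i j = ρ

section Aux
set_option linter.unusedSectionVars false
set_option maxHeartbeats 1000000
variable {L R : Type*} [Fintype L] [DecidableEq L] [Fintype R] [DecidableEq R]

def locOp' {L R : Type*} (Um : Matrix L L ℂ) (Vm : Matrix R R ℂ) (m n : ℕ) :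
    Matrix ((Fin m → L) × (Fin n → R)) ((Fin m → L) × (Fin n → R)) ℂ :=
  fun x y => (∏ k, Um (x.1 k) (y.1 k)) * ∏ k, Vm (x.2 k) (y.2 k)

lemma sum_fun_prod' {m : ℕ} (g : Fin m → L → ℂ) :
    ∑ f : Fin m → L, ∏ k, g k (f k) = ∏ k, ∑ x, g k x := by
  simpa [Fintype.piFinset_univ] using
    (Finset.sum_prod_piFinset (Finset.univ : Finset L) g)

lemma prod_boole_eq' {m : ℕ} {α : Type*} [DecidableEq α] (u v : Fin m → α) :
    (∏ k, if u k = v k then (1:ℂ) else 0) = if u = v then 1 else 0 := by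
  rw [Finset.prod_boole]
  simp [funext_iff]

lemma bigU_orth' {m : ℕ} (Um : Matrix L L ℂ) (hU : Umᴴ * Um = 1) (u v : Fin m → L) :
    (∑ f : Fin m → L, (starRingEnd ℂ) (∏ k, Um (f k) (u k)) * ∏ k, Um (f k) (v k))
      = if u = v then 1 else 0 := by
  have h1 : ∀ f : Fin m → L, (starRingEnd ℂ) (∏ k, Um (f k) (u k)) * ∏ k, Um (f k) (v k)
      = ∏ k, ((starRingEnd ℂ) (Um (f k) (u k)) * Um (f k) (v k)) := by
    intro f; rw [map_prod, ← Finset.prod_mul_distrib]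
  simp_rw [h1]
  rw [sum_fun_prod' (fun k x => (starRingEnd ℂ) (Um x (u k)) * Um x (v k))]
  have hk : ∀ k, (∑ x, (starRingEnd ℂ) (Um x (u k)) * Um x (v k)) = if u k = v k then (1:ℂ) else 0 := by
    intro k
    have := congrFun (congrFun hU (u k)) (v k)
    simpa [Matrix.mul_apply, Matrix.conjTranspose_apply, Matrix.one_apply] using this
  simp_rw [hk]
  exact prod_boole_eq' u v

lemma locOp_unitary {m n : ℕ} (Um : Matrix L L ℂ) (Vm : Matrix R R ℂ)
    (hU : Umᴴ * Um = 1) (hV : Vmᴴ * Vm = 1) :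
    (locOp' Um Vm m n)ᴴ * locOp' Um Vm m n = 1 := by
  funext x y
  simp only [Matrix.mul_apply, Matrix.conjTranspose_apply, locOp']
  rw [Fintype.sum_prod_type]
  have h1 : ∀ (f : Fin m → L) (g : Fin n → R),
      star ((∏ k, Um (f k) (x.1 k)) * ∏ k, Vm (g k) (x.2 k)) *
        ((∏ k, Um (f k) (y.1 k)) * ∏ k, Vm (g k) (y.2 k))
      = ((starRingEnd ℂ) (∏ k, Um (f k) (x.1 k)) * ∏ k, Um (f k) (y.1 k)) *
        ((starRingEnd ℂ) (∏ k, Vm (g k) (x.2 k)) * ∏ k, Vm (g k) (y.2 k)) := by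
    intro f g
    simp only [star_mul', RCLike.star_def]
    ring
  simp_rw [h1]
  rw [← Finset.sum_mul_sum]
  rw [bigU_orth' Um hU x.1 y.1, bigU_orth' Vm hV x.2 y.2]
  by_cases h1 : x.1 = y.1 <;> by_cases h2 : x.2 = y.2 <;>
    simp [Matrix.one_apply, Prod.ext_iff, h1, h2]

lemma smul_posSemidef {N : Type*} [Fintype N] {M : Matrix N N ℂ}
    (hM : M.PosSemidef) {c : ℝ} (hc : 0 ≤ c) : ((c : ℂ) • M).PosSemidef := by
  constructor
  · unfold Matrix.IsHermitian
    rw [Matrix.conjTranspose_smul, hM.1.eq]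
    congr 1
    simp
  · intro x
    exact (hM.smul (Complex.zero_le_real.mpr hc)).2 x

lemma sum_posSemidef {N ι : Type*} [Fintype N] [Fintype ι] {M : ι → Matrix N N ℂ}
    (hM : ∀ k, (M k).PosSemidef) : (∑ k, M k).PosSemidef := by
  classical
  refine Finset.sum_induction M Matrix.PosSemidef (fun a b ha hb => ha.add hb)
    Matrix.PosSemidef.zero (fun k _ => hM k)

lemma sum_comm4 {a b c d : Type*} [Fintype a] [Fintype b] [Fintype c] [Fintype d]
    (F : a → b → c → d → ℂ) :
    ∑ x, ∑ y, ∑ z, ∑ t, F x y z t = ∑ z, ∑ t, ∑ y, ∑ x, F x y z t :=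
  calc ∑ x, ∑ y, ∑ z, ∑ t, F x y z t
      = ∑ x, ∑ z, ∑ y, ∑ t, F x y z t :=
        Finset.sum_congr rfl fun _ _ => Finset.sum_comm
    _ = ∑ x, ∑ z, ∑ t, ∑ y, F x y z t :=
        Finset.sum_congr rfl fun _ _ => Finset.sum_congr rfl fun _ _ => Finset.sum_comm
    _ = ∑ z, ∑ x, ∑ t, ∑ y, F x y z t := Finset.sum_comm
    _ = ∑ z, ∑ t, ∑ x, ∑ y, F x y z t :=
        Finset.sum_congr rfl fun _ _ => Finset.sum_comm
    _ = ∑ z, ∑ t, ∑ y, ∑ x, F x y z t :=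
        Finset.sum_congr rfl fun _ _ => Finset.sum_congr rfl fun _ _ => Finset.sum_comm


lemma sum_fun_prod {m : ℕ} (g : Fin m → L → ℂ) :
    ∑ f : Fin m → L, ∏ k, g k (f k) = ∏ k, ∑ x, g k x := by
  simpa [Fintype.piFinset_univ] using
    (Finset.sum_prod_piFinset (Finset.univ : Finset L) g)

lemma key_sum {m : ℕ} (Um : Matrix L L ℂ) (hU : Umᴴ * Um = 1)
    (i : Fin m) (a c : L) (f' f'' : Fin m → L) :
    ∑ f : Fin m → L, (if f i = a then (1:ℂ) else 0) * ((∏ k, Um (f k) (f' k)) *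
      (starRingEnd ℂ) (∏ k, Um (Function.update f i c k) (f'' k)))
    = (Um a (f' i) * (starRingEnd ℂ) (Um c (f'' i))) *
        if f'' = Function.update f' i (f'' i) then 1 else 0 := by
  have hsummand : ∀ f : Fin m → L,
      (if f i = a then (1:ℂ) else 0) * ((∏ k, Um (f k) (f' k)) *
        (starRingEnd ℂ) (∏ k, Um (Function.update f i c k) (f'' k)))
      = ∏ k, ((if k = i then (if f k = a then (1:ℂ) else 0) else 1) *
          (Um (f k) (f' k) * (starRingEnd ℂ) (Um (if k = i then c else f k) (f'' k)))) := by
    intro f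
    rw [Finset.prod_mul_distrib, Finset.prod_mul_distrib]
    congr 1
    · rw [Finset.prod_ite_eq' Finset.univ i (fun k => if f k = a then (1:ℂ) else 0)]
      simp
    congr 1
    rw [map_prod]
    refine Finset.prod_congr rfl fun k _ => ?_
    congr 2
    simp [Function.update_apply]
  simp_rw [hsummand]
  rw [sum_fun_prod (fun k x => (if k = i then (if x = a then (1:ℂ) else 0) else 1) *
      (Um x (f' k) * (starRingEnd ℂ) (Um (if k = i then c else x) (f'' k))))]
  rw [Finset.prod_eq_mul_prod_sdiff_singleton_of_mem (Finset.mem_univ i)]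
  congr 1
  · simp [Finset.sum_ite_eq', ite_mul]
  have hoff : ∀ k ∈ Finset.univ \ {i},
      (∑ x, (if k = i then (if x = a then (1:ℂ) else 0) else 1) *
        (Um x (f' k) * (starRingEnd ℂ) (Um (if k = i then c else x) (f'' k))))
      = if f'' k = f' k then 1 else 0 := by
    intro k hk
    have hki : k ≠ i := by simpa using hk
    simp only [if_neg hki, one_mul]
    have := congrFun (congrFun hU (f'' k)) (f' k)
    simp only [Matrix.mul_apply, Matrix.conjTranspose_apply, Matrix.one_apply] at this
    rw [← this]
    exact Finset.sum_congr rfl fun x _ => by rw [RCLike.star_def]; ring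
  rw [Finset.prod_congr rfl hoff, Finset.prod_boole]
  congr 1
  simp only [eq_iff_iff]
  constructor
  · intro hall
    funext k
    by_cases hk : k = i
    · subst hk; simp
    · rw [Function.update_of_ne hk]
      exact hall k (by simpa using hk)
  · intro heq k hk
    have hki : k ≠ i := by simpa using hk
    have := congrFun heq k
    rwa [Function.update_of_ne hki] at this

lemma sum_update_delta {α : Type*} [Fintype α] [DecidableEq α] {m : ℕ} (i : Fin m)
    (f' : Fin m → α) (F : (Fin m → α) → ℂ) :
    ∑ f'' : Fin m → α, (if f'' = Function.update f' i (f'' i) then F f'' else 0)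
    = ∑ a : α, F (Function.update f' i a) := by
  have h : ∀ f'' : Fin m → α, (if f'' = Function.update f' i (f'' i) then F f'' else 0)
      = ∑ a : α, if f'' = Function.update f' i a then F (Function.update f' i a) else 0 := by
    intro f''
    rw [Finset.sum_eq_single (f'' i)]
    · by_cases h : f'' = Function.update f' i (f'' i)
      · rw [if_pos h, if_pos h, ← h]
      · rw [if_neg h, if_neg h]
    · intro b _ hb
      rw [if_neg]
      intro hc
      apply hb; rw [hc, Function.update_self]
    · simp
  simp_rw [h]
  rw [Finset.sum_comm]
  refine Finset.sum_congr rfl fun a _ => ?_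
  rw [Finset.sum_ite_eq' Finset.univ (Function.update f' i a)
    (fun _ => F (Function.update f' i a))]
  simp


lemma sum_pair_delta (a : L) (b : R) (F : L × R → ℂ) :
    ∑ x : L × R, (if a = x.1 ∧ b = x.2 then F x else 0) = F (a, b) := by
  rw [Fintype.sum_prod_type]
  simp_rw [ite_and]
  have h1 : ∀ x : L, (∑ y : R, if a = x then if b = y then F (x,y) else 0 else 0)
      = if a = x then F (x,b) else 0 := by
    intro x; split <;> simp [Finset.sum_ite_eq]
  simp_rw [h1]
  simp [Finset.sum_ite_eq]

lemma pairReduce_locOp_apply {m n : ℕ} (Um : Matrix L L ℂ) (Vm : Matrix R R ℂ)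
    (hU : Umᴴ * Um = 1) (hV : Vmᴴ * Vm = 1)
    (w : Matrix ((Fin m → L) × (Fin n → R)) ((Fin m → L) × (Fin n → R)) ℂ)
    (i : Fin m) (j : Fin n) (p q : L × R) :
    pairReduce (locOp' Um Vm m n * w * (locOp' Um Vm m n)ᴴ) i j p q
    = ∑ x : (Fin m → L) × (Fin n → R), ∑ a : L, ∑ b : R,
        (Um p.1 (x.1 i) * (starRingEnd ℂ) (Um q.1 a)) *
          ((Vm p.2 (x.2 j) * (starRingEnd ℂ) (Vm q.2 b)) *
            w x (Function.update x.1 i a, Function.update x.2 j b)) := by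
  simp only [pairReduce, Matrix.mul_apply, Matrix.conjTranspose_apply, locOp']
  simp only [Finset.mul_sum, Finset.sum_mul, mul_ite, ite_mul, mul_zero, zero_mul]
  have step1 : ∀ (f : Fin m → L) (g : Fin n → R),
      (if f i = p.1 ∧ g j = p.2 then
        ∑ y : (Fin m → L) × (Fin n → R), ∑ x' : (Fin m → L) × (Fin n → R),
          ((∏ k, Um (f k) (x'.1 k)) * ∏ k, Vm (g k) (x'.2 k)) * w x' y *
            star ((∏ k, Um (Function.update f i q.1 k) (y.1 k)) *
              ∏ k, Vm (Function.update g j q.2 k) (y.2 k))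
        else 0)
      = ∑ y : (Fin m → L) × (Fin n → R), ∑ x' : (Fin m → L) × (Fin n → R),
          ((if f i = p.1 then (1:ℂ) else 0) * ((∏ k, Um (f k) (x'.1 k)) *
             (starRingEnd ℂ) (∏ k, Um (Function.update f i q.1 k) (y.1 k)))) *
          (((if g j = p.2 then (1:ℂ) else 0) * ((∏ k, Vm (g k) (x'.2 k)) *
             (starRingEnd ℂ) (∏ k, Vm (Function.update g j q.2 k) (y.2 k)))) * w x' y) := by
    intro f g
    by_cases h1 : f i = p.1 <;> by_cases h2 : g j = p.2 <;>
      simp only [h1, h2, if_true, if_false, true_and, false_and, and_true, and_false,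
        if_neg, one_mul, zero_mul, mul_zero, Finset.sum_const_zero, if_pos] <;>
      first
      | (exact (Finset.sum_congr rfl fun y _ => Finset.sum_congr rfl fun x' _ => by
          simp only [star_mul', RCLike.star_def]; ring))
      | simp
  simp_rw [step1]
  rw [sum_comm4]
  have step2 : ∀ (z t : (Fin m → L) × (Fin n → R)),
      (∑ g : Fin n → R, ∑ f : Fin m → L,
        ((if f i = p.1 then (1:ℂ) else 0) * ((∏ k, Um (f k) (t.1 k)) *
           (starRingEnd ℂ) (∏ k, Um (Function.update f i q.1 k) (z.1 k)))) *
        (((if g j = p.2 then (1:ℂ) else 0) * ((∏ k, Vm (g k) (t.2 k)) *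
           (starRingEnd ℂ) (∏ k, Vm (Function.update g j q.2 k) (z.2 k)))) * w t z))
      = ((Um p.1 (t.1 i) * (starRingEnd ℂ) (Um q.1 (z.1 i))) *
          if z.1 = Function.update t.1 i (z.1 i) then 1 else 0) *
        ((((Vm p.2 (t.2 j) * (starRingEnd ℂ) (Vm q.2 (z.2 j))) *
          if z.2 = Function.update t.2 j (z.2 j) then 1 else 0)) * w t z) := by
    intro z t
    simp_rw [← Finset.sum_mul]
    rw [← Finset.mul_sum, ← Finset.sum_mul]
    rw [key_sum Um hU i p.1 q.1 t.1 z.1, key_sum Vm hV j p.2 q.2 t.2 z.2]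
  simp_rw [step2]
  rw [Finset.sum_comm]
  refine Finset.sum_congr rfl fun t _ => ?_
  rw [Fintype.sum_prod_type]
  dsimp only
  have step3 : ∀ (y1 : Fin m → L) (y2 : Fin n → R),
      (Um p.1 (t.1 i) * (starRingEnd ℂ) (Um q.1 (y1 i)) *
          if y1 = Function.update t.1 i (y1 i) then (1:ℂ) else 0) *
        ((Vm p.2 (t.2 j) * (starRingEnd ℂ) (Vm q.2 (y2 j)) *
          if y2 = Function.update t.2 j (y2 j) then (1:ℂ) else 0) * w t (y1, y2))
      = if y2 = Function.update t.2 j (y2 j) then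
          (if y1 = Function.update t.1 i (y1 i) then
            Um p.1 (t.1 i) * (starRingEnd ℂ) (Um q.1 (y1 i)) *
              (Vm p.2 (t.2 j) * (starRingEnd ℂ) (Vm q.2 (y2 j)) * w t (y1, y2))
          else 0) else 0 := by
    intro y1 y2
    by_cases h1 : y1 = Function.update t.1 i (y1 i) <;>
      by_cases h2 : y2 = Function.update t.2 j (y2 j)
    · rw [if_pos h1, if_pos h2, if_pos h2, if_pos h1]; ring
    · rw [if_pos h1, if_neg h2, if_neg h2]; ring
    · rw [if_neg h1, if_pos h2, if_pos h2, if_neg h1]; ring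
    · rw [if_neg h1, if_neg h2, if_neg h2]; ring
  simp_rw [step3]
  simp only [sum_update_delta]
  rw [Finset.sum_comm]
  simp only [sum_update_delta]
  rw [Finset.sum_comm]
  refine Finset.sum_congr rfl fun a _ => Finset.sum_congr rfl fun b _ => ?_
  simp [Function.update_self]

lemma kron_conj_apply {m n : ℕ} (Um : Matrix L L ℂ) (Vm : Matrix R R ℂ)
    (w : Matrix ((Fin m → L) × (Fin n → R)) ((Fin m → L) × (Fin n → R)) ℂ)
    (i : Fin m) (j : Fin n) (p q : L × R) :
    ((Um ⊗ₖ Vm) * pairReduce w i j * (Um ⊗ₖ Vm)ᴴ) p q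
    = ∑ x : (Fin m → L) × (Fin n → R), ∑ a : L, ∑ b : R,
        (Um p.1 (x.1 i) * (starRingEnd ℂ) (Um q.1 a)) *
          ((Vm p.2 (x.2 j) * (starRingEnd ℂ) (Vm q.2 b)) *
            w x (Function.update x.1 i a, Function.update x.2 j b)) := by
  simp only [Matrix.mul_apply, Matrix.conjTranspose_apply, Matrix.kroneckerMap_apply,
    pairReduce]
  simp only [Finset.mul_sum, Finset.sum_mul, mul_ite, ite_mul, mul_zero, zero_mul]
  rw [sum_comm4]
  conv_rhs => rw [Fintype.sum_prod_type]
  refine Finset.sum_congr rfl fun f _ => Finset.sum_congr rfl fun g _ => ?_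
  have step1 : (∑ x1 : L × R, ∑ z : L × R,
        if f i = x1.1 ∧ g j = x1.2 then
          Um p.1 x1.1 * Vm p.2 x1.2 *
            w (f, g) (Function.update f i z.1, Function.update g j z.2) *
            star (Um q.1 z.1 * Vm q.2 z.2) else 0)
      = ∑ x1 : L × R, (if f i = x1.1 ∧ g j = x1.2 then ∑ z : L × R,
          Um p.1 x1.1 * Vm p.2 x1.2 *
            w (f, g) (Function.update f i z.1, Function.update g j z.2) *
            star (Um q.1 z.1 * Vm q.2 z.2) else 0) :=
    Finset.sum_congr rfl fun x1 _ => by split <;> simp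
  rw [step1, sum_pair_delta (f i) (g j)]
  rw [Fintype.sum_prod_type]
  refine Finset.sum_congr rfl fun a _ => Finset.sum_congr rfl fun b _ => ?_
  simp only [star_mul', RCLike.star_def]
  ring


lemma sum_comm3 {a b c : Type*} [Fintype a] [Fintype b] [Fintype c]
    (F : a → b → c → ℂ) :
    ∑ x, ∑ y, ∑ z, F x y z = ∑ z, ∑ x, ∑ y, F x y z :=
  calc ∑ x, ∑ y, ∑ z, F x y z
      = ∑ x, ∑ z, ∑ y, F x y z := Finset.sum_congr rfl fun _ _ => Finset.sum_comm
    _ = ∑ z, ∑ x, ∑ y, F x y z := Finset.sum_comm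

lemma pairReduce_sum_smul {ι : Type*} [Fintype ι] {m n : ℕ} (c : ι → ℂ)
    (M : ι → Matrix ((Fin m → L) × (Fin n → R)) ((Fin m → L) × (Fin n → R)) ℂ)
    (i : Fin m) (j : Fin n) :
    pairReduce (∑ k, c k • M k) i j = ∑ k, c k • pairReduce (M k) i j := by
  funext p q
  simp only [pairReduce, Matrix.sum_apply, Matrix.smul_apply, smul_eq_mul]
  have h : ∀ (f : Fin m → L) (g : Fin n → R),
      (if f i = p.1 ∧ g j = p.2 then
        ∑ k, c k * M k (f, g) (Function.update f i q.1, Function.update g j q.2) else 0)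
      = ∑ k, if f i = p.1 ∧ g j = p.2 then
          c k * M k (f, g) (Function.update f i q.1, Function.update g j q.2) else 0 := by
    intro f g; split <;> simp
  simp_rw [h]
  simp_rw [Finset.mul_sum, mul_ite, mul_zero]
  rw [sum_comm3]

lemma pairReduce_conj {m n : ℕ} (Um : Matrix L L ℂ) (Vm : Matrix R R ℂ)
    (hU : Umᴴ * Um = 1) (hV : Vmᴴ * Vm = 1)
    (w : Matrix ((Fin m → L) × (Fin n → R)) ((Fin m → L) × (Fin n → R)) ℂ)
    (i : Fin m) (j : Fin n) :
    pairReduce (locOp' Um Vm m n * w * (locOp' Um Vm m n)ᴴ) i j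
      = (Um ⊗ₖ Vm) * pairReduce w i j * (Um ⊗ₖ Vm)ᴴ := by
  funext p q
  rw [pairReduce_locOp_apply Um Vm hU hV w i j p q,
    kron_conj_apply Um Vm w i j p q]

end Aux

theorem mixture_of_local_unitaries_preserves_sharability
    {L R : Type*} [Fintype L] [DecidableEq L] [Fintype R] [DecidableEq R]
    {ι : Type*} [Fintype ι]
    (ρ : Matrix (L × R) (L × R) ℂ) (hρ : IsDensity ρ)
    (lam : ι → ℝ) (hlam : ∀ i, 0 ≤ lam i) (hsum : ∑ i, lam i = 1)
    (U : ι → Matrix.unitaryGroup L ℂ) (V : ι → Matrix.unitaryGroup R ℂ)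
    (m n : ℕ) (h : Sharable m n ρ) :
    Sharable m n (∑ i, (lam i : ℂ) •
      (((U i : Matrix L L ℂ) ⊗ₖ (V i : Matrix R R ℂ)) * ρ *
        ((U i : Matrix L L ℂ) ⊗ₖ (V i : Matrix R R ℂ))ᴴ)) := by
  obtain ⟨w, ⟨hwP, hwT⟩, hred⟩ := h
  have hU1 : ∀ k, ((U k : Matrix L L ℂ))ᴴ * (U k : Matrix L L ℂ) = 1 := fun k => by
    rw [← Matrix.star_eq_conjTranspose]; exact (Unitary.mem_iff.mp (U k).2).1
  have hV1 : ∀ k, ((V k : Matrix R R ℂ))ᴴ * (V k : Matrix R R ℂ) = 1 := fun k => by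
    rw [← Matrix.star_eq_conjTranspose]; exact (Unitary.mem_iff.mp (V k).2).1
  set A : ι → Matrix ((Fin m → L) × (Fin n → R)) ((Fin m → L) × (Fin n → R)) ℂ :=
    fun k => locOp' (U k : Matrix L L ℂ) (V k : Matrix R R ℂ) m n with hA
  have hAk : ∀ k, (A k)ᴴ * A k = 1 := fun k =>
    locOp_unitary _ _ (hU1 k) (hV1 k)
  refine ⟨∑ k, (lam k : ℂ) • (A k * w * (A k)ᴴ), ⟨?_, ?_⟩, ?_⟩
  · exact sum_posSemidef fun k =>
      smul_posSemidef (hwP.mul_mul_conjTranspose_same (A k)) (hlam k)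
  · rw [Matrix.trace_sum]
    simp_rw [Matrix.trace_smul, smul_eq_mul]
    have htr : ∀ k, (A k * w * (A k)ᴴ).trace = 1 := fun k => by
      rw [Matrix.trace_mul_comm, ← Matrix.mul_assoc, hAk k, Matrix.one_mul, hwT]
    simp_rw [htr, mul_one, ← Complex.ofReal_sum, hsum, Complex.ofReal_one]
  · intro i j
    rw [pairReduce_sum_smul]
    refine Finset.sum_congr rfl fun k _ => ?_
    rw [pairReduce_conj (U k : Matrix L L ℂ) (V k : Matrix R R ℂ) (hU1 k) (hV1 k) w i j,
      hred i j]
end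
end

section
/- If a bipartite density operator ρ on finite-dimensional Hilbert spaces H_L ⊗ H_R is separable, then ρ is m-n sharable for every m ≥ 1 and n ≥ 1. -/
open Matrix Kronecker
open scoped ComplexOrder

noncomputable section

/-- `ρ` is separable if it is a finite convex combination of tensor products of
density operators. -/
def Separable {L R : Type*} [Fintype L] [DecidableEq L] [Fintype R] [DecidableEq R]
    (ρ : Matrix (L × R) (L × R) ℂ) : Prop :=
  ∃ (k : ℕ) (lam : Fin k → ℝ) (σ : Fin k → Matrix L L ℂ) (τ : Fin k → Matrix R R ℂ),
    (∀ i, 0 ≤ lam i) ∧ (∑ i, lam i = 1) ∧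
    (∀ i, IsDensity (σ i)) ∧ (∀ i, IsDensity (τ i)) ∧
    ρ = ∑ i, (lam i : ℂ) • (σ i ⊗ₖ τ i)


/-- m-fold tensor power of a matrix, indexed by function types. -/
def powM {a b : Type*} [Fintype a] [Fintype b] (m : ℕ) (A : Matrix a b ℂ) :
    Matrix (Fin m → a) (Fin m → b) ℂ :=
  fun f g => ∏ i, A (f i) (g i)

lemma powM_conjTranspose_mul_self {a : Type*} [Fintype a] (m : ℕ) (B : Matrix a a ℂ) :
    powM m (Bᴴ * B) = (powM m B)ᴴ * powM m B := by
  ext f g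
  simp only [powM, Matrix.mul_apply, Matrix.conjTranspose_apply]
  rw [Finset.prod_univ_sum]
  rw [Fintype.piFinset_univ]
  apply Finset.sum_congr rfl
  intro h _
  rw [Finset.prod_mul_distrib, star_prod]

lemma powM_posSemidef {a : Type*} [Fintype a] [DecidableEq a] (m : ℕ) {A : Matrix a a ℂ}
    (hA : A.PosSemidef) : (powM m A).PosSemidef := by
  obtain ⟨B, rfl⟩ : ∃ B, A = Bᴴ * B := by
    open scoped MatrixOrder in exact CStarAlgebra.nonneg_iff_eq_star_mul_self.mp hA.nonneg
  rw [powM_conjTranspose_mul_self]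
  exact Matrix.posSemidef_conjTranspose_mul_self _

lemma powM_trace {a : Type*} [Fintype a] (m : ℕ) (A : Matrix a a ℂ) (hA : A.trace = 1) :
    (powM m A).trace = 1 := by
  simp only [Matrix.trace, Matrix.diag, powM]
  have h := Finset.prod_univ_sum (fun _ : Fin m => (Finset.univ : Finset a))
    (fun (_ : Fin m) (x : a) => A x x)
  rw [Fintype.piFinset_univ] at h
  rw [← h]
  simp only [Matrix.trace, Matrix.diag] at hA
  simp [hA]

lemma kron_conjTranspose {a b c d : Type*} (C : Matrix a b ℂ) (D : Matrix c d ℂ) :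
    (C ⊗ₖ D)ᴴ = Cᴴ ⊗ₖ Dᴴ := by
  ext ⟨x, y⟩ ⟨u, v⟩
  simp [Matrix.conjTranspose_apply, Matrix.kroneckerMap_apply, mul_comm]

lemma kron_posSemidef {a b : Type*} [Fintype a] [Fintype b] [DecidableEq a] [DecidableEq b]
    {A : Matrix a a ℂ} {B : Matrix b b ℂ} (hA : A.PosSemidef) (hB : B.PosSemidef) :
    (A ⊗ₖ B).PosSemidef := by
  obtain ⟨C, rfl⟩ : ∃ C, A = Cᴴ * C := by
    open scoped MatrixOrder in exact CStarAlgebra.nonneg_iff_eq_star_mul_self.mp hA.nonneg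
  obtain ⟨D, rfl⟩ : ∃ D, B = Dᴴ * D := by
    open scoped MatrixOrder in exact CStarAlgebra.nonneg_iff_eq_star_mul_self.mp hB.nonneg
  rw [Matrix.mul_kronecker_mul, ← kron_conjTranspose]
  exact Matrix.posSemidef_conjTranspose_mul_self _

lemma posSemidef_real_smul {a : Type*} [Fintype a] {M : Matrix a a ℂ} (hM : M.PosSemidef)
    {c : ℝ} (hc : 0 ≤ c) : ((c : ℂ) • M).PosSemidef := by
  constructor
  · unfold Matrix.IsHermitian
    rw [Matrix.conjTranspose_smul, hM.1.eq]
    norm_num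
  · intro x
    exact (hM.smul (a := (c : ℂ)) (by exact_mod_cast hc)).2 x


lemma sum_pow_reduce {a : Type*} [Fintype a] [DecidableEq a] {m : ℕ} (i : Fin m)
    (A : Matrix a a ℂ) (hA : A.trace = 1) (p q : a) :
    ∑ f : Fin m → a, (if f i = p then powM m A f (Function.update f i q) else 0)
      = A p q := by
  have key : ∀ f : Fin m → a,
      (if f i = p then powM m A f (Function.update f i q) else 0)
        = ∏ i' : Fin m, (if i' = i then (if f i' = p then A (f i') q else 0)
            else A (f i') (f i')) := by
    intro f
    by_cases hf : f i = p
    · simp only [hf, if_true, powM]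
      apply Finset.prod_congr rfl
      intro i' _
      by_cases hi : i' = i
      · subst hi; simp [hf, Function.update_self]
      · simp [hi, Function.update_of_ne hi]
    · rw [if_neg hf]
      symm
      apply Finset.prod_eq_zero (Finset.mem_univ i)
      simp [hf]
  simp only [key]
  have h := Finset.prod_univ_sum (fun _ : Fin m => (Finset.univ : Finset a))
    (fun (i' : Fin m) (x : a) => if i' = i then (if x = p then A x q else 0) else A x x)
  rw [Fintype.piFinset_univ] at h
  rw [← h]
  rw [Finset.prod_eq_single i]
  · simp
  · intro b _ hb
    simp only [if_neg hb]
    simpa [Matrix.trace, Matrix.diag] using hA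
  · simp

lemma sum_sum_ite {α β : Type*} [Fintype α] [Fintype β]
    (P : α → Prop) [DecidablePred P] (Q : β → Prop) [DecidablePred Q]
    (c : ℂ) (X : α → ℂ) (Y : β → ℂ) :
    ∑ f : α, ∑ g : β, (if P f ∧ Q g then c * (X f * Y g) else 0)
      = c * ((∑ f : α, if P f then X f else 0) * (∑ g : β, if Q g then Y g else 0)) := by
  simp only [Finset.mul_sum, Finset.sum_mul]
  rw [Finset.sum_comm]
  apply Finset.sum_congr rfl
  intro g _
  apply Finset.sum_congr rfl
  intro f _
  by_cases hP : P f <;> by_cases hQ : Q g <;> simp [hP, hQ] <;> ring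

theorem separable_implies_sharable
    {L R : Type*} [Fintype L] [DecidableEq L] [Fintype R] [DecidableEq R]
    (ρ : Matrix (L × R) (L × R) ℂ) (hρ : IsDensity ρ) (hsep : Separable ρ)
    (m n : ℕ) (hm : 1 ≤ m) (hn : 1 ≤ n) :
    Sharable m n ρ := by
  obtain ⟨k, lam, σ, τ, hlam0, hlam1, hσ, hτ, hρeq⟩ := hsep
  refine ⟨∑ t : Fin k, (lam t : ℂ) • (powM m (σ t) ⊗ₖ powM n (τ t)), ⟨?_, ?_⟩, ?_⟩
  · exact Finset.sum_induction _ _ (fun _ _ hA hB => hA.add hB) Matrix.PosSemidef.zero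
      (fun t _ => posSemidef_real_smul
        (kron_posSemidef (powM_posSemidef m (hσ t).1) (powM_posSemidef n (hτ t).1))
        (hlam0 t))
  · rw [Matrix.trace_sum]
    have : ∀ t : Fin k, ((lam t : ℂ) • (powM m (σ t) ⊗ₖ powM n (τ t))).trace = (lam t : ℂ) := by
      intro t
      rw [Matrix.trace_smul, Matrix.trace_kronecker, powM_trace m _ (hσ t).2,
        powM_trace n _ (hτ t).2]
      simp
    rw [Finset.sum_congr rfl (fun t _ => this t)]
    push_cast
    exact_mod_cast congrArg (Complex.ofReal) hlam1
  · intro i j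
    ext ⟨p1, p2⟩ ⟨q1, q2⟩
    have hw : ∀ (f f' : Fin m → L) (g g' : Fin n → R),
        (∑ t : Fin k, (lam t : ℂ) • (powM m (σ t) ⊗ₖ powM n (τ t))) (f, g) (f', g')
          = ∑ t, (lam t : ℂ) * (powM m (σ t) f f' * powM n (τ t) g g') := by
      intro f f' g g'
      simp [Matrix.sum_apply, Matrix.smul_apply, Matrix.kroneckerMap_apply, smul_eq_mul,
        mul_assoc]
    show (∑ f : Fin m → L, ∑ g : Fin n → R,
        if f i = p1 ∧ g j = p2 then
          (∑ t : Fin k, (lam t : ℂ) • (powM m (σ t) ⊗ₖ powM n (τ t)))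
            (f, g) (Function.update f i q1, Function.update g j q2)
        else 0) = ρ (p1, p2) (q1, q2)
    calc (∑ f : Fin m → L, ∑ g : Fin n → R,
          if f i = p1 ∧ g j = p2 then
            (∑ t : Fin k, (lam t : ℂ) • (powM m (σ t) ⊗ₖ powM n (τ t)))
              (f, g) (Function.update f i q1, Function.update g j q2)
          else 0)
        = ∑ f : Fin m → L, ∑ g : Fin n → R, ∑ t : Fin k,
            (if f i = p1 ∧ g j = p2 then
              (lam t : ℂ) * (powM m (σ t) f (Function.update f i q1)
                * powM n (τ t) g (Function.update g j q2)) else 0) := by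
          refine Finset.sum_congr rfl fun f _ => Finset.sum_congr rfl fun g _ => ?_
          rw [hw]
          split_ifs with h
          · rfl
          · simp
      _ = ∑ t : Fin k, ∑ f : Fin m → L, ∑ g : Fin n → R,
            (if f i = p1 ∧ g j = p2 then
              (lam t : ℂ) * (powM m (σ t) f (Function.update f i q1)
                * powM n (τ t) g (Function.update g j q2)) else 0) := by
          exact (Finset.sum_congr rfl fun f _ => Finset.sum_comm).trans Finset.sum_comm
      _ = ∑ t : Fin k, (lam t : ℂ) * (σ t p1 q1 * τ t p2 q2) := by
          refine Finset.sum_congr rfl fun t _ => ?_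
          rw [sum_sum_ite (fun f : Fin m → L => f i = p1) (fun g : Fin n → R => g j = p2)]
          rw [sum_pow_reduce i (σ t) (hσ t).2, sum_pow_reduce j (τ t) (hτ t).2]
      _ = ρ (p1, p2) (q1, q2) := by
          rw [hρeq]
          simp [Matrix.sum_apply, Matrix.smul_apply, Matrix.kroneckerMap_apply, smul_eq_mul,
            mul_assoc]
end
end

section
/- Let d = 2 and Ψ_AB, Ψ_AC, Ψ_BC ∈ [−1,1]. There exists a density operator w on ℂ² ⊗ ℂ² ⊗ ℂ² (factors A, B, C) whose reduced states on the pairs A-B, A-C, B-C are the qubit Werner states ρ_W(Ψ_AB), ρ_W(Ψ_AC), ρ_W(Ψ_BC) respectively, if and only if 1 − Ψ̄ ≥ (2/3)·|Ψ_BC + ω·Ψ_AC + ω²·Ψ_AB| and Ψ̄ ≥ 0, where Ψ̄ = (Ψ_AB + Ψ_AC + Ψ_BC)/3, ω = e^{2πi/3}, and |·| is the complex modulus. -/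
open Matrix
open scoped ComplexOrder

noncomputable section

/-- Partial trace of a tripartite operator over the first factor (reduced state on B-C). -/
def trA3 {A B C : Type*} [Fintype A] (w : Matrix (A × B × C) (A × B × C) ℂ) :
    Matrix (B × C) (B × C) ℂ :=
  fun p q => ∑ a : A, w (a, p.1, p.2) (a, q.1, q.2)

/-- The swap operator `V` on `ℂ^d ⊗ ℂ^d`, `V(ψ ⊗ φ) = φ ⊗ ψ`. -/
def swapOp (d : ℕ) : Matrix (Fin d × Fin d) (Fin d × Fin d) ℂ :=
  fun p q => if p.1 = q.2 ∧ p.2 = q.1 then 1 else 0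

/-- The qudit Werner state with parameter `Ψ`:
`ρ_W(Ψ) = (d/(d²−1))·[(d−Ψ)·I/d² + (Ψ − 1/d)·V/d]`. -/
def wernerState (d : ℕ) (Ψ : ℝ) : Matrix (Fin d × Fin d) (Fin d × Fin d) ℂ :=
  ((d : ℂ) / ((d : ℂ) ^ 2 - 1)) •
    ((((d : ℂ) - (Ψ : ℂ)) / (d : ℂ) ^ 2) • (1 : Matrix (Fin d × Fin d) (Fin d × Fin d) ℂ) +
      (((Ψ : ℂ) - 1 / (d : ℂ)) / (d : ℂ)) • swapOp d)

/-- The projector `|Φ⁺⟩⟨Φ⁺|` onto the maximally entangled state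
`|Φ⁺⟩ = (1/√d)·Σᵢ |i⟩⊗|i⟩`. -/
def phiPlusProj (d : ℕ) : Matrix (Fin d × Fin d) (Fin d × Fin d) ℂ :=
  fun p q => if p.1 = p.2 ∧ q.1 = q.2 then 1 / (d : ℂ) else 0

/-- The qudit isotropic state with parameter `Φ`:
`ρ_I(Φ) = (d/(d²−1))·[(d−Φ)·I/d² + (Φ − 1/d)·|Φ⁺⟩⟨Φ⁺|]`. -/
def isoState (d : ℕ) (Φ : ℝ) : Matrix (Fin d × Fin d) (Fin d × Fin d) ℂ :=
  ((d : ℂ) / ((d : ℂ) ^ 2 - 1)) •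
    ((((d : ℂ) - (Φ : ℂ)) / (d : ℂ) ^ 2) • (1 : Matrix (Fin d × Fin d) (Fin d × Fin d) ℂ) +
      ((Φ : ℂ) - 1 / (d : ℂ)) • phiPlusProj d)

/-! ### Auxiliary material -/

namespace WernerAux

abbrev Q3 := Fin 2 × Fin 2 × Fin 2
def s0 (p : Q3) : Q3 := (p.1, p.2.2, p.2.1)
def s1 (p : Q3) : Q3 := (p.2.2, p.2.1, p.1)
def s2 (p : Q3) : Q3 := (p.2.1, p.1, p.2.2)
def V0z : Matrix Q3 Q3 ℤ := fun p q => if q = s0 p then 1 else 0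
def V1z : Matrix Q3 Q3 ℤ := fun p q => if q = s1 p then 1 else 0
def V2z : Matrix Q3 Q3 ℤ := fun p q => if q = s2 p then 1 else 0
def Dz : Matrix Q3 Q3 ℤ := V1z * V0z

def cmap : Matrix Q3 Q3 ℤ → Matrix Q3 Q3 ℂ := fun M => M.map (Int.cast)
def V0 : Matrix Q3 Q3 ℂ := cmap V0z
def V1 : Matrix Q3 Q3 ℂ := cmap V1z
def V2 : Matrix Q3 Q3 ℂ := cmap V2z
def Dm : Matrix Q3 Q3 ℂ := cmap Dz

lemma V0_apply (p q : Q3) : V0 p q = if q = s0 p then 1 else 0 := by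
  simp [V0, cmap, V0z, Matrix.map_apply, apply_ite (Int.cast : ℤ → ℂ)]
lemma V1_apply (p q : Q3) : V1 p q = if q = s1 p then 1 else 0 := by
  simp [V1, cmap, V1z, Matrix.map_apply, apply_ite (Int.cast : ℤ → ℂ)]
lemma V2_apply (p q : Q3) : V2 p q = if q = s2 p then 1 else 0 := by
  simp [V2, cmap, V2z, Matrix.map_apply, apply_ite (Int.cast : ℤ → ℂ)]

lemma cmap_mul (M N : Matrix Q3 Q3 ℤ) : cmap (M * N) = cmap M * cmap N :=
  Matrix.map_mul (f := Int.castRingHom ℂ)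
lemma cmap_add (M N : Matrix Q3 Q3 ℤ) : cmap (M + N) = cmap M + cmap N := by
  simp [cmap, Matrix.map_add]
lemma cmap_one : cmap 1 = 1 := Matrix.map_one _ (by simp) (by simp)
lemma cmap_sub (M N : Matrix Q3 Q3 ℤ) : cmap (M - N) = cmap M - cmap N := by
  simp [cmap, Matrix.map_sub]

lemma hV00 : V0 * V0 = 1 := by rw [V0, ← cmap_mul, (by decide : V0z*V0z = 1), cmap_one]
lemma hV11 : V1 * V1 = 1 := by rw [V1, ← cmap_mul, (by decide : V1z*V1z = 1), cmap_one]
lemma hV22 : V2 * V2 = 1 := by rw [V2, ← cmap_mul, (by decide : V2z*V2z = 1), cmap_one]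
lemma hV01 : V0 * V1 = V0 + V1 + V2 - 1 - Dm := by
  rw [V0, V1, ← cmap_mul, (by decide : V0z*V1z = (V0z+V1z+V2z) - 1 - Dz)]
  simp [cmap_sub, cmap_add, cmap_one, V0, V1, V2, Dm]
lemma hV12 : V1 * V2 = V0 + V1 + V2 - 1 - Dm := by
  rw [V1, V2, ← cmap_mul, (by decide : V1z*V2z = (V0z+V1z+V2z) - 1 - Dz)]
  simp [cmap_sub, cmap_add, cmap_one, V0, V1, V2, Dm]
lemma hV20 : V2 * V0 = V0 + V1 + V2 - 1 - Dm := by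
  rw [V2, V0, ← cmap_mul, (by decide : V2z*V0z = (V0z+V1z+V2z) - 1 - Dz)]
  simp [cmap_sub, cmap_add, cmap_one, V0, V1, V2, Dm]
lemma hV10 : V1 * V0 = Dm := by rw [V1, V0, ← cmap_mul]; rfl
lemma hV21 : V2 * V1 = Dm := by
  rw [V2, V1, ← cmap_mul, (by decide : V2z*V1z = V1z * V0z)]; rfl
lemma hV02 : V0 * V2 = Dm := by
  rw [V0, V2, ← cmap_mul, (by decide : V0z*V2z = V1z * V0z)]; rfl

/-- The basic linear combination `x•1 + a0•V0 + a1•V1 + a2•V2`. -/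
def lin (x a0 a1 a2 : ℂ) : Matrix Q3 Q3 ℂ := x•1 + a0•V0 + a1•V1 + a2•V2

lemma sq_formula (x y0 y1 y2 : ℂ) :
    lin x y0 y1 y2 * lin x y0 y1 y2 =
      lin (x^2 + y0^2 + y1^2 + y2^2 - (y0*y1 + y0*y2 + y1*y2))
        (2*x*y0 + (y0*y1 + y0*y2 + y1*y2))
        (2*x*y1 + (y0*y1 + y0*y2 + y1*y2))
        (2*x*y2 + (y0*y1 + y0*y2 + y1*y2)) := by
  unfold lin
  simp only [add_mul, mul_add, smul_mul_smul_comm, mul_one, one_mul,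
    hV00, hV11, hV22, hV01, hV12, hV20, hV10, hV21, hV02]
  module

@[simp] lemma s0_eq_iff (p q : Q3) : (p = s0 q) ↔ (q = s0 p) := by
  constructor <;> (rintro rfl; rfl)
@[simp] lemma s1_eq_iff (p q : Q3) : (p = s1 q) ↔ (q = s1 p) := by
  constructor <;> (rintro rfl; rfl)
@[simp] lemma s2_eq_iff (p q : Q3) : (p = s2 q) ↔ (q = s2 p) := by
  constructor <;> (rintro rfl; rfl)

/-! Hermiticity -/

lemma V0_herm : V0ᴴ = V0 := by
  ext p q
  rw [Matrix.conjTranspose_apply, V0_apply, V0_apply]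
  simp [s0_eq_iff, apply_ite (star : ℂ → ℂ)]
lemma V1_herm : V1ᴴ = V1 := by
  ext p q
  rw [Matrix.conjTranspose_apply, V1_apply, V1_apply]
  simp [s1_eq_iff, apply_ite (star : ℂ → ℂ)]
lemma V2_herm : V2ᴴ = V2 := by
  ext p q
  rw [Matrix.conjTranspose_apply, V2_apply, V2_apply]
  simp [s2_eq_iff, apply_ite (star : ℂ → ℂ)]

lemma lin_herm (x a0 a1 a2 : ℝ) :
    (lin (x:ℂ) (a0:ℂ) (a1:ℂ) (a2:ℂ))ᴴ = lin (x:ℂ) (a0:ℂ) (a1:ℂ) (a2:ℂ) := by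
  unfold lin
  simp [Matrix.conjTranspose_add, Matrix.conjTranspose_smul, V0_herm, V1_herm, V2_herm,
    Complex.star_def, Complex.conj_ofReal]

/-! PSD helpers -/

lemma psd_trace_nonneg {n : Type*} [Fintype n] [DecidableEq n]
    {M : Matrix n n ℂ} (h : M.PosSemidef) : 0 ≤ M.trace := by
  rw [Matrix.trace]
  refine Finset.sum_nonneg fun i _ => ?_
  exact h.diag_nonneg

lemma psd_smul_real {n : Type*} [Fintype n] {M : Matrix n n ℂ} (h : M.PosSemidef)
    {r : ℝ} (hr : 0 ≤ r) : ((r : ℂ) • M).PosSemidef := by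
  constructor
  · rw [Matrix.IsHermitian, Matrix.conjTranspose_smul, h.1]
    simp [Complex.conj_ofReal]
  · exact (h.smul (a := (r:ℂ)) (by exact_mod_cast hr)).2

open scoped MatrixOrder in
lemma trace_mul_psd_nonneg {n : Type*} [Fintype n] [DecidableEq n]
    {M X : Matrix n n ℂ} (hM : M.PosSemidef) (hX : X.PosSemidef) :
    0 ≤ (M * X).trace := by
  have h1 : M * X = M * CFC.sqrt X * CFC.sqrt X := by
    rw [Matrix.mul_assoc, CFC.sqrt_mul_sqrt_self X (Matrix.nonneg_iff_posSemidef.mpr hX)]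
  rw [h1, Matrix.trace_mul_cycle]
  have h2 : CFC.sqrt X * M * CFC.sqrt X = (CFC.sqrt X)ᴴ * M * CFC.sqrt X := by
    rw [(Matrix.nonneg_iff_posSemidef.mp (CFC.sqrt_nonneg X)).1]
  rw [h2]
  exact psd_trace_nonneg (hM.conjTranspose_mul_mul_same _)

/-! Traces against permutation operators -/

lemma trace_mul_perm (w : Matrix Q3 Q3 ℂ) (V : Matrix Q3 Q3 ℂ) (σ : Q3 → Q3)
    (hV : ∀ p q, V p q = if q = σ p then 1 else 0) (hσ : ∀ p q, (p = σ q) ↔ (q = σ p)) :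
    (w * V).trace = ∑ p, w p (σ p) := by
  refine Finset.sum_congr rfl fun p _ => ?_
  rw [Matrix.diag, Matrix.mul_apply]
  rw [Finset.sum_eq_single (σ p)]
  · rw [hV (σ p) p, if_pos ((hσ p (σ p)).2 rfl), mul_one]
  · intro q _ hq
    rw [hV q p, if_neg (fun h => hq ((hσ p q).1 h)), mul_zero]
  · intro h; exact absurd (Finset.mem_univ _) h

lemma trace_mul_V0 (w : Matrix Q3 Q3 ℂ) :
    (w * V0).trace = ∑ b, ∑ c, trA3 w (b,c) (c,b) := by
  rw [trace_mul_perm w V0 s0 V0_apply s0_eq_iff]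
  rw [Fintype.sum_prod_type, Finset.sum_comm]
  simp only [trA3, Fintype.sum_prod_type, s0]

lemma trace_mul_V1 (w : Matrix Q3 Q3 ℂ) :
    (w * V1).trace = ∑ a, ∑ c, trB3 w (a,c) (c,a) := by
  rw [trace_mul_perm w V1 s1 V1_apply s1_eq_iff]
  rw [Fintype.sum_prod_type]
  simp only [trB3, Fintype.sum_prod_type, s1]
  exact Finset.sum_congr rfl fun a _ => Finset.sum_comm

lemma trace_mul_V2 (w : Matrix Q3 Q3 ℂ) :
    (w * V2).trace = ∑ a, ∑ b, trC3 w (a,b) (b,a) := by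
  rw [trace_mul_perm w V2 s2 V2_apply s2_eq_iff]
  rw [Fintype.sum_prod_type]
  simp only [trC3, Fintype.sum_prod_type, s2]

lemma werner_swap_trace (Ψ : ℝ) :
    (∑ b : Fin 2, ∑ c : Fin 2, wernerState 2 Ψ (b,c) (c,b)) = (Ψ : ℂ) := by
  simp [wernerState, swapOp, Matrix.one_apply, Fin.sum_univ_two, Prod.ext_iff]
  ring

lemma trace_lin (x a0 a1 a2 : ℂ) :
    (lin x a0 a1 a2).trace = 8*x + 4*a0 + 4*a1 + 4*a2 := by
  unfold lin
  simp only [Matrix.trace_add, Matrix.trace_smul, Matrix.trace_one]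
  have h0 : V0.trace = 4 := by
    simp [Matrix.trace, Matrix.diag, V0_apply, s0, Prod.ext_iff, Fin.sum_univ_two]
    norm_cast
  have h1 : V1.trace = 4 := by
    simp [Matrix.trace, Matrix.diag, V1_apply, s1, Prod.ext_iff, Fin.sum_univ_two]
    norm_cast
  have h2 : V2.trace = 4 := by
    simp [Matrix.trace, Matrix.diag, V2_apply, s2, Prod.ext_iff, Fin.sum_univ_two]
    norm_cast
  rw [h0, h1, h2]
  rw [show ((Fintype.card Q3 : ℂ)) = 8 by norm_cast]
  simp [smul_eq_mul]
  ring

lemma trace_w_lin (w : Matrix Q3 Q3 ℂ) (x a0 a1 a2 : ℂ) :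
    (w * lin x a0 a1 a2).trace =
      x * w.trace + a0 * (w*V0).trace + a1 * (w*V1).trace + a2 * (w*V2).trace := by
  unfold lin
  simp only [Matrix.mul_add, Matrix.mul_smul, Matrix.trace_add, Matrix.trace_smul, mul_one,
    Matrix.mul_one, smul_eq_mul]

/-! Partial traces of `lin` -/

lemma trC3_lin (x a0 a1 a2 : ℂ) :
    trC3 (lin x a0 a1 a2) =
      (2*x + a0 + a1) • (1 : Matrix (Fin 2 × Fin 2) (Fin 2 × Fin 2) ℂ) + (2*a2) • swapOp 2 := by
  ext p q
  obtain ⟨a, b⟩ := p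
  obtain ⟨a', b'⟩ := q
  simp only [trC3, lin, Matrix.add_apply, Matrix.smul_apply, Matrix.one_apply,
    V0_apply, V1_apply, V2_apply, s0, s1, s2, swapOp, Fin.sum_univ_two, smul_eq_mul,
    Prod.ext_iff]
  fin_cases a <;> fin_cases b <;> fin_cases a' <;> fin_cases b' <;> norm_num <;> ring

lemma trB3_lin (x a0 a1 a2 : ℂ) :
    trB3 (lin x a0 a1 a2) =
      (2*x + a0 + a2) • (1 : Matrix (Fin 2 × Fin 2) (Fin 2 × Fin 2) ℂ) + (2*a1) • swapOp 2 := by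
  ext p q
  obtain ⟨a, b⟩ := p
  obtain ⟨a', b'⟩ := q
  simp only [trB3, lin, Matrix.add_apply, Matrix.smul_apply, Matrix.one_apply,
    V0_apply, V1_apply, V2_apply, s0, s1, s2, swapOp, Fin.sum_univ_two, smul_eq_mul,
    Prod.ext_iff]
  fin_cases a <;> fin_cases b <;> fin_cases a' <;> fin_cases b' <;> norm_num <;> ring

lemma trA3_lin (x a0 a1 a2 : ℂ) :
    trA3 (lin x a0 a1 a2) =
      (2*x + a1 + a2) • (1 : Matrix (Fin 2 × Fin 2) (Fin 2 × Fin 2) ℂ) + (2*a0) • swapOp 2 := by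
  ext p q
  obtain ⟨a, b⟩ := p
  obtain ⟨a', b'⟩ := q
  simp only [trA3, lin, Matrix.add_apply, Matrix.smul_apply, Matrix.one_apply,
    V0_apply, V1_apply, V2_apply, s0, s1, s2, swapOp, Fin.sum_univ_two, smul_eq_mul,
    Prod.ext_iff]
  fin_cases a <;> fin_cases b <;> fin_cases a' <;> fin_cases b' <;> norm_num <;> ring

lemma wernerExpand (Ψ : ℝ) :
    wernerState 2 Ψ = (((2 - Ψ)/6 : ℝ) : ℂ) • (1 : Matrix (Fin 2 × Fin 2) (Fin 2 × Fin 2) ℂ)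
      + (((2*Ψ - 1)/6 : ℝ) : ℂ) • swapOp 2 := by
  unfold wernerState
  match_scalars <;> (push_cast; ring)


/-! ### The explicit construction for the backward direction -/

lemma build (p t0 t1 t2 al ga : ℝ) (hp : 0 ≤ p)
    (hsum : t0 + t1 + t2 = 0)
    (hq : al^2 + ga^2 * ((2/3) * (t0^2 + t1^2 + t2^2)) = 1 - p)
    (hga0 : (2*al*ga - 1) * t0 = 0) (hga1 : (2*al*ga - 1) * t1 = 0)
    (hga2 : (2*al*ga - 1) * t2 = 0) :
    ∃ w : Matrix Q3 Q3 ℂ,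
      IsDensity w ∧ trC3 w = wernerState 2 (p + t2) ∧ trB3 w = wernerState 2 (p + t1) ∧
        trA3 w = wernerState 2 (p + t0) := by
  have hsumc : (t0:ℂ) + t1 + t2 = 0 := by exact_mod_cast hsum
  have hqc : (al:ℂ)^2 + (ga:ℂ)^2 * ((2/3) * ((t0:ℂ)^2 + (t1:ℂ)^2 + (t2:ℂ)^2))
      = 1 - (p:ℂ) := by
    have h := congrArg (fun x : ℝ => (x:ℂ)) hq
    push_cast at h
    linear_combination h
  have hga0c : (2*(al:ℂ)*(ga:ℂ) - 1) * (t0:ℂ) = 0 := by exact_mod_cast hga0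
  have hga1c : (2*(al:ℂ)*(ga:ℂ) - 1) * (t1:ℂ) = 0 := by exact_mod_cast hga1
  have hga2c : (2*(al:ℂ)*(ga:ℂ) - 1) * (t2:ℂ) = 0 := by exact_mod_cast hga2
  set wT : Matrix Q3 Q3 ℂ := lin (((1-p)/4 : ℝ) : ℂ) (((2*(p+t0)-1)/12 : ℝ) : ℂ)
      (((2*(p+t1)-1)/12 : ℝ) : ℂ) (((2*(p+t2)-1)/12 : ℝ) : ℂ) with hwT
  have hS : lin 0 1 1 1 * lin 0 1 1 1 = (3:ℂ) • lin 0 1 1 1 := by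
    rw [sq_formula]; unfold lin; match_scalars <;> ring
  set b0 : ℝ := -al/3 + 2*ga/3*t0 with hb0
  set b1 : ℝ := -al/3 + 2*ga/3*t1 with hb1
  set b2 : ℝ := -al/3 + 2*ga/3*t2 with hb2
  have hB : lin (al:ℂ) (b0:ℂ) (b1:ℂ) (b2:ℂ) * lin (al:ℂ) (b0:ℂ) (b1:ℂ) (b2:ℂ) =
      lin ((1-p : ℝ):ℂ) (((-(1-p) + 2*t0)/3 : ℝ):ℂ) (((-(1-p) + 2*t1)/3 : ℝ):ℂ)
        (((-(1-p) + 2*t2)/3 : ℝ):ℂ) := by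
    rw [sq_formula]; unfold lin
    match_scalars
    · push_cast [hb0, hb1, hb2]
      linear_combination hqc - (2*(ga:ℂ)^2/9) * ((t0:ℂ)+(t1:ℂ)+(t2:ℂ)) * hsumc
    · push_cast [hb0, hb1, hb2]
      linear_combination (-1/3)*hqc + (2/3)*hga0c
        + ((2*(ga:ℂ)^2/9) * ((t0:ℂ)+(t1:ℂ)+(t2:ℂ)) - (4*(al:ℂ)*(ga:ℂ)/9)) * hsumc
    · push_cast [hb0, hb1, hb2]
      linear_combination (-1/3)*hqc + (2/3)*hga1c
        + ((2*(ga:ℂ)^2/9) * ((t0:ℂ)+(t1:ℂ)+(t2:ℂ)) - (4*(al:ℂ)*(ga:ℂ)/9)) * hsumc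
    · push_cast [hb0, hb1, hb2]
      linear_combination (-1/3)*hqc + (2/3)*hga2c
        + ((2*(ga:ℂ)^2/9) * ((t0:ℂ)+(t1:ℂ)+(t2:ℂ)) - (4*(al:ℂ)*(ga:ℂ)/9)) * hsumc
  have hdecomp : wT = ((p/36 : ℝ):ℂ) • (lin 0 1 1 1 * lin 0 1 1 1)
      + ((1/4 : ℝ):ℂ) • (lin (al:ℂ) (b0:ℂ) (b1:ℂ) (b2:ℂ) * lin (al:ℂ) (b0:ℂ) (b1:ℂ) (b2:ℂ)) := by
    rw [hS, hB, hwT]; unfold lin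
    match_scalars <;> push_cast <;> ring
  have hlinherm : ∀ x a0 a1 a2 : ℝ, (lin (x:ℂ) (a0:ℂ) (a1:ℂ) (a2:ℂ)).IsHermitian :=
    fun x a0 a1 a2 => lin_herm x a0 a1 a2
  have hpsd : wT.PosSemidef := by
    rw [hdecomp]
    refine Matrix.PosSemidef.add (psd_smul_real ?_ (by positivity))
      (psd_smul_real ?_ (by norm_num))
    · have := Matrix.posSemidef_conjTranspose_mul_self (lin (0:ℂ) 1 1 1)
      rwa [show ((lin (0:ℂ) 1 1 1)ᴴ) = lin (0:ℂ) 1 1 1 by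
        exact_mod_cast hlinherm 0 1 1 1, ] at this
    · have := Matrix.posSemidef_conjTranspose_mul_self (lin (al:ℂ) (b0:ℂ) (b1:ℂ) (b2:ℂ))
      rwa [(hlinherm al b0 b1 b2 : _)] at this
  refine ⟨wT, ⟨hpsd, ?_⟩, ?_, ?_, ?_⟩
  · rw [hwT, trace_lin]
    push_cast
    linear_combination ((2:ℂ)/3) * hsumc
  · rw [hwT, trC3_lin, wernerExpand]
    match_scalars <;> push_cast <;>
      first
      | linear_combination (-(1:ℂ)/6) * hsumc
      | linear_combination ((1:ℂ)/6) * hsumc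
      | ring
  · rw [hwT, trB3_lin, wernerExpand]
    match_scalars <;> push_cast <;>
      first
      | linear_combination (-(1:ℂ)/6) * hsumc
      | linear_combination ((1:ℂ)/6) * hsumc
      | ring
  · rw [hwT, trA3_lin, wernerExpand]
    match_scalars <;> push_cast <;>
      first
      | linear_combination (-(1:ℂ)/6) * hsumc
      | linear_combination ((1:ℂ)/6) * hsumc
      | ring

end WernerAux

theorem werner_three_party_joinability_d_eq_2
    (ΨAB ΨAC ΨBC : ℝ)
    (hAB : ΨAB ∈ Set.Icc (-1 : ℝ) 1) (hAC : ΨAC ∈ Set.Icc (-1 : ℝ) 1)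
    (hBC : ΨBC ∈ Set.Icc (-1 : ℝ) 1) :
    (∃ w : Matrix (Fin 2 × Fin 2 × Fin 2) (Fin 2 × Fin 2 × Fin 2) ℂ,
        IsDensity w ∧ trC3 w = wernerState 2 ΨAB ∧ trB3 w = wernerState 2 ΨAC ∧
          trA3 w = wernerState 2 ΨBC) ↔
      (1 - (ΨAB + ΨAC + ΨBC) / 3 ≥
          2 / 3 * ‖(ΨBC : ℂ) + Complex.exp (2 * Real.pi * Complex.I / 3) * (ΨAC : ℂ)
            + Complex.exp (2 * Real.pi * Complex.I / 3) ^ 2 * (ΨAB : ℂ)‖ ∧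
        (ΨAB + ΨAC + ΨBC) / 3 ≥ 0) := by
  classical
  open WernerAux in
  -- Notation for the complex combination and its modulus
  set ω : ℂ := Complex.exp (2 * Real.pi * Complex.I / 3) with hωdef
  set z : ℂ := (ΨBC : ℂ) + ω * (ΨAC : ℂ) + ω ^ 2 * (ΨAB : ℂ) with hzdef
  set R : ℝ := ‖z‖ with hRdef
  set zre : ℝ := ΨBC - ΨAC/2 - ΨAB/2 with hzredef
  set zim : ℝ := Real.sqrt 3/2 * (ΨAC - ΨAB) with hzimdef
  have hs3 : (Real.sqrt 3 : ℝ)^2 = 3 := Real.sq_sqrt (by norm_num)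
  have hs3c : ((Real.sqrt 3 : ℝ) : ℂ)^2 = 3 := by exact_mod_cast congrArg (fun x : ℝ => (x:ℂ)) hs3
  have hω : ω = ((-(1/2) : ℝ) : ℂ) + ((Real.sqrt 3/2 : ℝ) : ℂ) * Complex.I := by
    rw [hωdef, show (2 * (Real.pi:ℂ) * Complex.I / 3) = ((2*Real.pi/3 : ℝ) : ℂ) * Complex.I by
      push_cast; ring]
    rw [Complex.exp_mul_I, ← Complex.ofReal_cos, ← Complex.ofReal_sin]
    rw [show (2*Real.pi/3 : ℝ) = Real.pi - Real.pi/3 by ring]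
    rw [Real.cos_pi_sub, Real.sin_pi_sub, Real.cos_pi_div_three, Real.sin_pi_div_three]
    try norm_num
  have hz : z = (zre : ℂ) + (zim : ℂ) * Complex.I := by
    rw [hzdef, hω, hzredef, hzimdef]
    push_cast
    linear_combination ((ΨAB:ℂ) * Complex.I^2 / 4) * hs3c + (3*(ΨAB:ℂ)/4) * Complex.I_sq
  have hre : z.re = zre := by rw [hz]; simp
  have him : z.im = zim := by rw [hz]; simp
  have habs : R = Real.sqrt (zre^2 + zim^2) := by
    rw [hRdef, Complex.norm_def, Complex.normSq_apply, hre, him]; ring_nf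
  have hRnn : 0 ≤ R := norm_nonneg z
  have hR2 : R^2 = zre^2 + zim^2 := by
    rw [habs]; exact Real.sq_sqrt (by positivity)
  constructor
  · -- FORWARD direction
    rintro ⟨w, ⟨hpsd, htr⟩, hC, hB, hA⟩
    have hT0 : (w * V0).trace = (ΨBC:ℂ) := by
      rw [trace_mul_V0, hA]; exact werner_swap_trace ΨBC
    have hT1 : (w * V1).trace = (ΨAC:ℂ) := by
      rw [trace_mul_V1, hB]; exact werner_swap_trace ΨAC
    have hT2 : (w * V2).trace = (ΨAB:ℂ) := by
      rw [trace_mul_V2, hC]; exact werner_swap_trace ΨAB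
    have key : ∀ m0 m1 m2 : ℝ, m0 + m1 + m2 = 1 → m0^2 + m1^2 + m2^2 = 1 →
        m0*ΨBC + m1*ΨAC + m2*ΨAB ≤ 1 := by
      intro m0 m1 m2 hm1 hm2
      have hσ2 : m0*m1 + m0*m2 + m1*m2 = 0 := by
        linear_combination ((m0+m1+m2+1)/2) * hm1 - (1/2) * hm2
      have hm2c : (m0:ℂ)^2 + (m1:ℂ)^2 + (m2:ℂ)^2 = 1 := by exact_mod_cast hm2
      have hσ2c : (m0:ℂ)*(m1:ℂ) + (m0:ℂ)*(m2:ℂ) + (m1:ℂ)*(m2:ℂ) = 0 := by exact_mod_cast hσ2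
      set X : Matrix Q3 Q3 ℂ :=
        lin ((1:ℝ):ℂ) ((-m0:ℝ):ℂ) ((-m1:ℝ):ℂ) ((-m2:ℝ):ℂ) with hXdef
      have hXX : X * X = (2:ℂ) • X := by
        rw [hXdef, sq_formula]; unfold lin
        match_scalars <;> push_cast
        · linear_combination hm2c - hσ2c
        · linear_combination hσ2c
        · linear_combination hσ2c
        · linear_combination hσ2c
      have hXherm : Xᴴ = X := lin_herm 1 (-m0) (-m1) (-m2)
      have hXpsd : X.PosSemidef := by
        have h2 : X = ((1/2 : ℝ):ℂ) • (Xᴴ * X) := by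
          rw [hXherm, hXX, smul_smul]; norm_num
        rw [h2]
        exact psd_smul_real (Matrix.posSemidef_conjTranspose_mul_self X) (by norm_num)
      have htr2 : 0 ≤ (w * X).trace := trace_mul_psd_nonneg hpsd hXpsd
      rw [hXdef, trace_w_lin, htr, hT0, hT1, hT2] at htr2
      have htr3 : ((0:ℝ):ℂ) ≤ ((1 - (m0*ΨBC + m1*ΨAC + m2*ΨAB) : ℝ):ℂ) := by
        rw [show ((1 - (m0*ΨBC + m1*ΨAC + m2*ΨAB) : ℝ):ℂ)
            = ((1:ℝ):ℂ) * 1 + ((-m0:ℝ):ℂ) * (ΨBC:ℂ) + ((-m1:ℝ):ℂ) * (ΨAC:ℂ)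
              + ((-m2:ℝ):ℂ) * (ΨAB:ℂ) by push_cast; ring]
        exact_mod_cast htr2
      have := Complex.real_le_real.mp htr3
      linarith
    constructor
    · -- modulus condition
      by_cases hR0 : R = 0
      · rw [hR0]
        have h1 := hBC.2; have h2 := hAC.2; have h3 := hAB.2
        rw [ge_iff_le]; norm_num; linarith
      · have hRpos : 0 < R := lt_of_le_of_ne hRnn (Ne.symm hR0)
        set c0 : ℝ := zre / R with hc0
        set c1 : ℝ := (-zre/2 + Real.sqrt 3 * zim/2) / R with hc1
        set c2 : ℝ := (-zre/2 - Real.sqrt 3 * zim/2) / R with hc2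
        have hRne : R ≠ 0 := hR0
        have hcsum : c0 + c1 + c2 = 0 := by
          rw [hc0, hc1, hc2, ← add_div, ← add_div,
            show zre + (-zre/2 + Real.sqrt 3 * zim/2) + (-zre/2 - Real.sqrt 3 * zim/2) = 0 by ring,
            zero_div]
        have hnum : zre^2 + (-zre/2 + Real.sqrt 3 * zim/2)^2 + (-zre/2 - Real.sqrt 3 * zim/2)^2
            = (3/2)*R^2 := by
          rw [hR2]; linear_combination (zim^2/2) * hs3
        have hc2sum : c0^2 + c1^2 + c2^2 = 3/2 := by
          rw [hc0, hc1, hc2, div_pow, div_pow, div_pow, ← add_div, ← add_div, hnum,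
            mul_div_assoc, div_self (pow_ne_zero 2 hRne), mul_one]
        have hnum2 : zre*ΨBC + (-zre/2 + Real.sqrt 3 * zim/2)*ΨAC
            + (-zre/2 - Real.sqrt 3 * zim/2)*ΨAB = R^2 := by
          rw [hR2, hzredef, hzimdef]; ring
        have hcΨ : c0*ΨBC + c1*ΨAC + c2*ΨAB = R := by
          rw [hc0, hc1, hc2, div_mul_eq_mul_div, div_mul_eq_mul_div, div_mul_eq_mul_div,
            ← add_div, ← add_div, hnum2, sq, mul_div_assoc, div_self hRne, mul_one]
        have hm1 : (1/3 + 2/3*c0) + (1/3 + 2/3*c1) + (1/3 + 2/3*c2) = 1 := by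
          linear_combination (2/3) * hcsum
        have hm2 : (1/3 + 2/3*c0)^2 + (1/3 + 2/3*c1)^2 + (1/3 + 2/3*c2)^2 = 1 := by
          linear_combination (4/9) * hc2sum + (4/9 + (4/9)*(c0+c1+c2)) * hcsum
        have hkey := key _ _ _ hm1 hm2
        have hexp : (1/3 + 2/3*c0)*ΨBC + (1/3 + 2/3*c1)*ΨAC + (1/3 + 2/3*c2)*ΨAB
            = (ΨAB + ΨAC + ΨBC)/3 + 2/3*(c0*ΨBC + c1*ΨAC + c2*ΨAB) := by ring
        rw [hexp, hcΨ] at hkey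
        rw [ge_iff_le]
        linarith
    · -- mean condition
      set S : Matrix Q3 Q3 ℂ := lin ((0:ℝ):ℂ) ((1:ℝ):ℂ) ((1:ℝ):ℂ) ((1:ℝ):ℂ) with hSdef
      have hSS : S * S = (3:ℂ) • S := by
        rw [hSdef, sq_formula]; unfold lin
        match_scalars <;> push_cast <;> ring
      have hSherm : Sᴴ = S := lin_herm 0 1 1 1
      have hSpsd : S.PosSemidef := by
        have h2 : S = ((1/3 : ℝ):ℂ) • (Sᴴ * S) := by
          rw [hSherm, hSS, smul_smul]; norm_num
        rw [h2]
        exact psd_smul_real (Matrix.posSemidef_conjTranspose_mul_self S) (by norm_num)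
      have htr2 : 0 ≤ (w * S).trace := trace_mul_psd_nonneg hpsd hSpsd
      rw [hSdef, trace_w_lin, htr, hT0, hT1, hT2] at htr2
      have htr3 : ((0:ℝ):ℂ) ≤ ((ΨBC + ΨAC + ΨAB : ℝ):ℂ) := by
        rw [show ((ΨBC + ΨAC + ΨAB : ℝ):ℂ)
            = ((0:ℝ):ℂ) * 1 + ((1:ℝ):ℂ) * (ΨBC:ℂ) + ((1:ℝ):ℂ) * (ΨAC:ℂ)
              + ((1:ℝ):ℂ) * (ΨAB:ℂ) by push_cast; ring]
        exact_mod_cast htr2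
      have := Complex.real_le_real.mp htr3
      linarith
  · -- BACKWARD direction
    rintro ⟨h1, h2⟩
    set p : ℝ := (ΨAB + ΨAC + ΨBC)/3 with hpdef
    have hR2' : R^2 = (ΨBC - ΨAC/2 - ΨAB/2)^2 + (Real.sqrt 3/2*(ΨAC - ΨAB))^2 := by
      rw [hR2, hzredef, hzimdef]
    have hst : (2/3) * ((ΨBC - p)^2 + (ΨAC - p)^2 + (ΨAB - p)^2) = ((2/3)*R)^2 := by
      rw [hpdef]
      linear_combination (-(4:ℝ)/9) * hR2' + (-(ΨAC - ΨAB)^2/9) * hs3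
    have hsum : (ΨBC - p) + (ΨAC - p) + (ΨAB - p) = 0 := by rw [hpdef]; ring
    have hqnn : 0 ≤ 1 - p := le_trans (by positivity) h1
    by_cases hR0 : R = 0
    · -- all deviations vanish
      have hz0 : (2/3) * ((ΨBC - p)^2 + (ΨAC - p)^2 + (ΨAB - p)^2) = 0 := by
        rw [hst, hR0]; ring
      have hs0 := sq_nonneg (ΨBC - p); have hs1 := sq_nonneg (ΨAC - p)
      have hs2 := sq_nonneg (ΨAB - p)
      have ht0 : ΨBC - p = 0 := pow_eq_zero_iff (two_ne_zero) |>.mp (by linarith)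
      have ht1 : ΨAC - p = 0 := pow_eq_zero_iff (two_ne_zero) |>.mp (by linarith)
      have ht2 : ΨAB - p = 0 := pow_eq_zero_iff (two_ne_zero) |>.mp (by linarith)
      obtain ⟨w, hw⟩ := build p (ΨBC - p) (ΨAC - p) (ΨAB - p) (Real.sqrt (1-p)) 0 h2
        hsum
        (by rw [ht0, ht1, ht2]; simp [Real.sq_sqrt hqnn])
        (by rw [ht0]; ring) (by rw [ht1]; ring) (by rw [ht2]; ring)
      rw [show p + (ΨAB - p) = ΨAB by ring, show p + (ΨAC - p) = ΨAC by ring,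
        show p + (ΨBC - p) = ΨBC by ring] at hw
      exact ⟨w, hw⟩
    · have hRpos : 0 < R := lt_of_le_of_ne hRnn (Ne.symm hR0)
      set m : ℝ := (2/3)*R with hmdef
      have hmpos : 0 < m := by rw [hmdef]; positivity
      have hqm : m ≤ 1 - p := h1
      have hA2 : Real.sqrt (1 - p + m)^2 = 1 - p + m := Real.sq_sqrt (by linarith)
      have hB2 : Real.sqrt (1 - p - m)^2 = 1 - p - m := Real.sq_sqrt (by linarith)
      set A : ℝ := Real.sqrt (1 - p + m) with hAdef
      set Bs : ℝ := Real.sqrt (1 - p - m) with hBdef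
      have hαγ : 2 * ((A + Bs)/2) * ((A - Bs)/(2*m)) = 1 := by
        field_simp
        linear_combination hA2 - hB2
      obtain ⟨w, hw⟩ := build p (ΨBC - p) (ΨAC - p) (ΨAB - p) ((A + Bs)/2) ((A - Bs)/(2*m)) h2
        hsum
        (by rw [hst]
            field_simp
            linear_combination 2*hA2 + 2*hB2)
        (by rw [hαγ]; ring) (by rw [hαγ]; ring) (by rw [hαγ]; ring)
      rw [show p + (ΨAB - p) = ΨAB by ring, show p + (ΨAC - p) = ΨAC by ring,
        show p + (ΨBC - p) = ΨBC by ring] at hw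
      exact ⟨w, hw⟩
end
end

section
/- Let |0⟩, |1⟩ be the standard basis of ℂ² and define the two-qubit density operator ρ = (1/3)·[(|0⟩⊗|0⟩ + |1⟩⊗|1⟩)(⟨0|⊗⟨0| + ⟨1|⊗⟨1|) + (|1⟩⊗|0⟩)(⟨1|⊗⟨0|)] on ℂ² ⊗ ℂ². Then ρ is 1-2 sharable but not 2-2 sharable. In particular, for a generic bipartite qubit state, 1-n sharability does not imply n-n sharability. -/
open Matrix
open scoped ComplexOrder

noncomputable section

/-- The two-qubit state `ρ = (1/3)[(|00⟩+|11⟩)(⟨00|+⟨11|) + |10⟩⟨10|]`. -/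
def rho13 : Matrix (Fin 2 × Fin 2) (Fin 2 × Fin 2) ℂ :=
  fun p q => (1 / 3 : ℂ) *
    ((if p.1 = p.2 then 1 else 0) * (if q.1 = q.2 then 1 else 0) +
      (if p = ((1 : Fin 2), (0 : Fin 2)) ∧ q = ((1 : Fin 2), (0 : Fin 2)) then 1 else 0))

set_option maxHeartbeats 2000000

/- ### Auxiliary lemmas -/

lemma sum_fun2 {M : Type*} [AddCommMonoid M] (F : (Fin 2 → Fin 2) → M) :
    ∑ f, F f = F ![0,0] + F ![0,1] + F ![1,0] + F ![1,1] := by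
  rw [show (Finset.univ : Finset (Fin 2 → Fin 2)) =
      {![0,0], ![0,1], ![1,0], ![1,1]} from by decide]
  rw [Finset.sum_insert (by decide), Finset.sum_insert (by decide),
    Finset.sum_insert (by decide), Finset.sum_singleton]
  simp [add_assoc]

lemma sum_fun1 {M : Type*} [AddCommMonoid M] (F : (Fin 1 → Fin 2) → M) :
    ∑ f, F f = F ![0] + F ![1] := by
  rw [show (Finset.univ : Finset (Fin 1 → Fin 2)) = {![0], ![1]} from by decide]
  rw [Finset.sum_insert (by decide), Finset.sum_singleton]

lemma upd0 (a b c : Fin 2) : Function.update ![a,b] 0 c = ![c,b] := by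
  funext x; fin_cases x <;> simp [Function.update]

lemma upd1 (a b c : Fin 2) : Function.update ![a,b] 1 c = ![a,c] := by
  funext x; fin_cases x <;> simp [Function.update]

lemma upd00 (a c : Fin 2) : Function.update ![a] 0 c = ![c] := by
  funext x; fin_cases x <;> simp [Function.update]

lemma psd_cs {n : Type*} [Fintype n] [DecidableEq n] {M : Matrix n n ℂ}
    (hM : M.PosSemidef) (a b : n) :
    ‖M a b‖ ^ 2 ≤ (M a a).re * (M b b).re := by
  obtain ⟨B, hB⟩ : ∃ B : Matrix n n ℂ, M = Bᴴ * B := by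
    open scoped MatrixOrder in
    obtain ⟨X, hX, -, hXX⟩ :=
      CFC.exists_sqrt_of_isSelfAdjoint_of_quasispectrumRestricts hM.isHermitian
        (QuasispectrumRestricts.nnreal_of_nonneg hM.nonneg)
    exact ⟨X, by rw [← hXX]; exact congrArg (· * X) hX.star_eq.symm⟩
  set u : EuclideanSpace ℂ n := WithLp.toLp 2 (fun k => B k a) with hu
  set v : EuclideanSpace ℂ n := WithLp.toLp 2 (fun k => B k b) with hv
  have hab : M a b = inner ℂ u v := by
    simp [hB, Matrix.mul_apply, conjTranspose_apply, PiLp.inner_apply, hu, hv, mul_comm]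
  have haa : (M a a).re = ‖u‖ ^ 2 := by
    have h : M a a = inner ℂ u u := by
      rw [PiLp.inner_apply]
      simp [hB, Matrix.mul_apply, conjTranspose_apply, hu, hv, mul_comm]
      simp only [Complex.mul_conj']
    rw [h, inner_self_eq_norm_sq_to_K]
    simp [← Complex.ofReal_pow]
  have hbb : (M b b).re = ‖v‖ ^ 2 := by
    have h : M b b = inner ℂ v v := by
      rw [PiLp.inner_apply]
      simp [hB, Matrix.mul_apply, conjTranspose_apply, hu, hv, mul_comm]
      simp only [Complex.mul_conj']
    rw [h, inner_self_eq_norm_sq_to_K]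
    simp [← Complex.ofReal_pow]
  have h1 : ‖M a b‖ = ‖(inner ℂ u v : ℂ)‖ := by rw [hab]
  have h2 := norm_inner_le_norm (𝕜 := ℂ) u v
  rw [h1, haa, hbb]
  nlinarith [norm_nonneg (inner ℂ u v : ℂ), norm_nonneg u, norm_nonneg v]

lemma psd_diag_nonneg {n : Type*} [Fintype n] [DecidableEq n] {M : Matrix n n ℂ}
    (hM : M.PosSemidef) (a : n) : 0 ≤ (M a a).re := by
  have h0 := hM.dotProduct_mulVec_nonneg (Pi.single a 1)
  have h : star (Pi.single a 1) ⬝ᵥ M *ᵥ (Pi.single a 1) = M a a := by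
    simp [dotProduct, mulVec]
    rw [Finset.sum_eq_single a (by intro b _ hb; simp [Pi.single_eq_of_ne hb]) (by simp)]
    rw [Finset.sum_eq_single a (by intro b _ hb; simp [Pi.single_eq_of_ne hb]) (by simp)]
    simp
  rw [h] at h0
  exact (Complex.le_def.mp h0).1

lemma psd_entry_zero_right {n : Type*} [Fintype n] [DecidableEq n] {M : Matrix n n ℂ}
    (hM : M.PosSemidef) {a b : n} (hb : (M b b).re = 0) : M a b = 0 := by
  have h := psd_cs hM a b
  rw [hb, mul_zero] at h
  have := norm_nonneg (M a b)
  have habs : ‖M a b‖ = 0 := by nlinarith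
  exact norm_eq_zero.mp habs

lemma psd_entry_zero_left {n : Type*} [Fintype n] [DecidableEq n] {M : Matrix n n ℂ}
    (hM : M.PosSemidef) {a b : n} (ha : (M a a).re = 0) : M a b = 0 := by
  have h := psd_cs hM a b
  rw [ha, zero_mul] at h
  have := norm_nonneg (M a b)
  have habs : ‖M a b‖ = 0 := by nlinarith
  exact norm_eq_zero.mp habs

/- ### The 1-2 extension: a rotated W state -/

/-- Amplitude vector of the (rotated) W state `(|000⟩ + |101⟩ + |110⟩)/√3`
(unnormalized, entries 0/1). -/
def vW : (Fin 1 → Fin 2) × (Fin 2 → Fin 2) → ℂ := fun x =>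
  if (x.1 0 = 0 ∧ x.2 0 = 0 ∧ x.2 1 = 0) ∨ (x.1 0 = 1 ∧ x.2 0 = 0 ∧ x.2 1 = 1) ∨
     (x.1 0 = 1 ∧ x.2 0 = 1 ∧ x.2 1 = 0) then 1 else 0

/-- The pure-state density matrix of the rotated W state. -/
def wW : Matrix ((Fin 1 → Fin 2) × (Fin 2 → Fin 2)) ((Fin 1 → Fin 2) × (Fin 2 → Fin 2)) ℂ :=
  fun a b => (1/3 : ℂ) * (vW a * vW b)

lemma vW_star (x : (Fin 1 → Fin 2) × (Fin 2 → Fin 2)) : star (vW x) = vW x := by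
  unfold vW; split_ifs <;> simp

lemma wW_psd : wW.PosSemidef := by
  refine Matrix.PosSemidef.of_dotProduct_mulVec_nonneg ?_ ?_
  · ext a b
    simp only [conjTranspose_apply, wW, star_mul', vW_star]
    have : star (1/3 : ℂ) = 1/3 := by norm_num
    rw [this]; ring
  · intro x
    set s : ℂ := ∑ b, vW b * x b with hs
    have hform : star x ⬝ᵥ wW *ᵥ x = (1/3) * (star s * s) := by
      simp only [dotProduct, mulVec, wW, hs]
      rw [star_sum]
      rw [Finset.sum_mul_sum]
      rw [Finset.mul_sum]
      apply Finset.sum_congr rfl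
      intro a _
      rw [Finset.mul_sum, Finset.mul_sum]
      apply Finset.sum_congr rfl
      intro b _
      simp only [star_mul', vW_star, Pi.star_apply]
      ring
    rw [hform]
    apply mul_nonneg
    · rw [show (1/3 : ℂ) = ((1/3 : ℝ) : ℂ) by push_cast; ring]
      rw [Complex.zero_le_real]; norm_num
    · exact star_mul_self_nonneg s

lemma wW_trace : wW.trace = 1 := by
  rw [Matrix.trace]
  rw [show ∑ a, wW.diag a = ∑ a : (Fin 1 → Fin 2) × (Fin 2 → Fin 2), wW a a from rfl]
  rw [Fintype.sum_prod_type]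
  rw [sum_fun1]
  rw [sum_fun2, sum_fun2]
  norm_num [wW, vW, Fin.ext_iff]

lemma wW_reduce : ∀ (i : Fin 1) (j : Fin 2), pairReduce wW i j = rho13 := by
  intro i j
  have hi : i = 0 := Subsingleton.elim i 0
  subst hi
  fin_cases j <;>
  · ext ⟨p1, p2⟩ ⟨q1, q2⟩
    fin_cases p1 <;> fin_cases p2 <;> fin_cases q1 <;> fin_cases q2 <;>
    · simp only [pairReduce, sum_fun1, sum_fun2, Fin.mk_zero, Fin.mk_one, upd00, upd0, upd1]
      norm_num [wW, vW, rho13, Fin.ext_iff, Prod.ext_iff]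

/- ### The main theorem -/

theorem one_two_sharable_but_not_two_two_sharable :
    Sharable 1 2 rho13 ∧ ¬ Sharable 2 2 rho13 := by
  constructor
  · exact ⟨wW, ⟨wW_psd, wW_trace⟩, wW_reduce⟩
  rintro ⟨w, ⟨hpsd, htr⟩, hred⟩
  have hent : ∀ (i j : Fin 2) (p q : Fin 2 × Fin 2), pairReduce w i j p q = rho13 p q := by
    intro i j p q; rw [hred i j]
  set d : ((Fin 2 → Fin 2) × (Fin 2 → Fin 2)) → ℝ := fun x => (w x x).re with hd
  have hdn : ∀ x, 0 ≤ d x := fun x => psd_diag_nonneg hpsd x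
  -- Z1 : diagonals with l1 = 0, r2 = 1 vanish
  have Z1 := hent 0 1 (0,1) (0,1)
  simp only [pairReduce, sum_fun2, upd0, upd1] at Z1
  norm_num [rho13, Fin.ext_iff, Prod.ext_iff] at Z1
  have Z1re := congrArg Complex.re Z1
  simp only [Complex.add_re, Complex.zero_re] at Z1re
  have z1c : d (![0,1], ![0,1]) = 0 := by
    have := hdn (![0,0], ![0,1]); have := hdn (![0,0], ![1,1])
    have := hdn (![0,1], ![0,1]); have := hdn (![0,1], ![1,1])
    simp only [hd] at *; linarith
  have z1d : d (![0,1], ![1,1]) = 0 := by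
    have := hdn (![0,0], ![0,1]); have := hdn (![0,0], ![1,1])
    have := hdn (![0,1], ![0,1]); have := hdn (![0,1], ![1,1])
    simp only [hd] at *; linarith
  -- Z2 : diagonals with l2 = 0, r1 = 1 vanish
  have Z2 := hent 1 0 (0,1) (0,1)
  simp only [pairReduce, sum_fun2, upd0, upd1] at Z2
  norm_num [rho13, Fin.ext_iff, Prod.ext_iff] at Z2
  have Z2re := congrArg Complex.re Z2
  simp only [Complex.add_re, Complex.zero_re] at Z2re
  have z2 : d (![1,0], ![1,0]) = 0 := by
    have := hdn (![0,0], ![1,0]); have := hdn (![0,0], ![1,1])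
    have := hdn (![1,0], ![1,0]); have := hdn (![1,0], ![1,1])
    simp only [hd] at *; linarith
  -- E1 : the key off-diagonal equation
  have E1 := hent 1 1 (0,0) (1,1)
  simp only [pairReduce, sum_fun2, upd0, upd1] at E1
  norm_num [rho13, Fin.ext_iff, Prod.ext_iff] at E1
  have k1 : w (![0,0], ![0,0]) (![0,1], ![0,1]) = 0 := psd_entry_zero_right hpsd z1c
  have k2 : w (![0,0], ![1,0]) (![0,1], ![1,1]) = 0 := psd_entry_zero_right hpsd z1d
  have k3 : w (![1,0], ![1,0]) (![1,1], ![1,1]) = 0 := psd_entry_zero_left hpsd z2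
  rw [k1, k2, k3] at E1
  have hkey : w (![1,0], ![0,0]) (![1,1], ![0,1]) = 1/3 := by
    linear_combination E1
  -- E2 : diagonal bound
  have E2 := hent 0 0 (1,0) (1,0)
  simp only [pairReduce, sum_fun2, upd0, upd1] at E2
  norm_num [rho13, Fin.ext_iff, Prod.ext_iff] at E2
  have E2re := congrArg Complex.re E2
  simp only [Complex.add_re] at E2re
  have hsum : d (![1,0], ![0,0]) + d (![1,1], ![0,1]) ≤ 1/3 := by
    have := hdn (![1,0], ![0,1]); have := hdn (![1,1], ![0,0])
    have hthird : ((1:ℂ)/3).re = 1/3 := by norm_num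
    simp only [hd] at *
    rw [hthird] at E2re
    linarith
  -- Cauchy-Schwarz contradiction
  have hcs := psd_cs hpsd (![1,0], ![0,0]) (![1,1], ![0,1])
  rw [hkey] at hcs
  have habs : ‖(1/3 : ℂ)‖ = 1/3 := by norm_num
  rw [habs] at hcs
  have h1 := hdn (![1,0], ![0,0]); have h2 := hdn (![1,1], ![0,1])
  simp only [hd] at *
  nlinarith
end
end

section
/- Let H_A, H_B be finite-dimensional complex Hilbert spaces and let ψ be a unit vector in H_A ⊗ H_B. If the pure state |ψ⟩⟨ψ| is 1-2 sharable, then ψ is a product vector, i.e., ψ = a ⊗ b for some vectors a ∈ H_A and b ∈ H_B. In particular, no pure entangled bipartite state (such as a maximally entangled Bell pair) is 1-2 sharable. -/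
open Matrix
open scoped ComplexOrder

noncomputable section

set_option linter.unusedSectionVars false

namespace PureAux

variable {A B : Type*} [Fintype A] [DecidableEq A] [Fintype B] [DecidableEq B]

def κ (a : A) (b c : B) : (Fin 1 → A) × (Fin 2 → B) := (fun _ => a, ![b, c])

lemma eta (r : (Fin 1 → A) × (Fin 2 → B)) : κ (r.1 0) (r.2 0) (r.2 1) = r := by
  obtain ⟨f, g⟩ := r
  unfold κ
  refine Prod.ext ?_ ?_
  · funext i
    have : i = 0 := Subsingleton.elim _ _
    subst this; rfl
  · funext i
    fin_cases i <;> rfl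

def EI : A × (B × B) ≃ ((Fin 1 → A) × (Fin 2 → B)) where
  toFun z := κ z.1 z.2.1 z.2.2
  invFun r := (r.1 0, (r.2 0, r.2 1))
  left_inv := by rintro ⟨a, b, c⟩; rfl
  right_inv := fun r => eta r

lemma sum_I (F : ((Fin 1 → A) × (Fin 2 → B)) → ℂ) :
    ∑ r, F r = ∑ a, ∑ b, ∑ c, F (κ a b c) := by
  rw [← Equiv.sum_comp (EI (A := A) (B := B)) F, Fintype.sum_prod_type]
  refine Finset.sum_congr rfl fun a _ => ?_
  rw [Fintype.sum_prod_type]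
  rfl

lemma upd1 (α α' : A) : Function.update (fun _ : Fin 1 => α) 0 α' = fun _ => α' := by
  funext i
  have : i = 0 := Subsingleton.elim _ _
  subst this; simp

lemma upd20 (β γ β' : B) : Function.update ![β, γ] 0 β' = ![β', γ] := by
  funext i
  fin_cases i <;> simp [Function.update]

lemma upd21 (β γ γ' : B) : Function.update ![β, γ] 1 γ' = ![β, γ'] := by
  funext i
  fin_cases i <;> simp [Function.update]

lemma red0 (w : Matrix ((Fin 1 → A) × (Fin 2 → B)) ((Fin 1 → A) × (Fin 2 → B)) ℂ)
    (a a' : A) (b b' : B) :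
    pairReduce w 0 0 (a, b) (a', b') = ∑ c, w (κ a b c) (κ a' b' c) := by
  show (∑ f : Fin 1 → A, ∑ g : Fin 2 → B,
    if f 0 = a ∧ g 0 = b then
      w (f, g) (Function.update f 0 a', Function.update g 0 b') else 0) = _
  rw [← Fintype.sum_prod_type (f := fun r : (Fin 1 → A) × (Fin 2 → B) =>
      if r.1 0 = a ∧ r.2 0 = b then
      w (r.1, r.2) (Function.update r.1 0 a', Function.update r.2 0 b') else 0)]
  rw [sum_I (F := fun r => if r.1 0 = a ∧ r.2 0 = b then
      w (r.1, r.2) (Function.update r.1 0 a', Function.update r.2 0 b') else 0)]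
  simp only [κ, Matrix.cons_val_zero, upd1, upd20, ite_and]
  simp [Finset.sum_ite_eq']

lemma red1 (w : Matrix ((Fin 1 → A) × (Fin 2 → B)) ((Fin 1 → A) × (Fin 2 → B)) ℂ)
    (a a' : A) (b b' : B) :
    pairReduce w 0 1 (a, b) (a', b') = ∑ c, w (κ a c b) (κ a' c b') := by
  show (∑ f : Fin 1 → A, ∑ g : Fin 2 → B,
    if f 0 = a ∧ g 1 = b then
      w (f, g) (Function.update f 0 a', Function.update g 1 b') else 0) = _
  rw [← Fintype.sum_prod_type (f := fun r : (Fin 1 → A) × (Fin 2 → B) =>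
      if r.1 0 = a ∧ r.2 1 = b then
      w (r.1, r.2) (Function.update r.1 0 a', Function.update r.2 1 b') else 0)]
  rw [sum_I (F := fun r => if r.1 0 = a ∧ r.2 1 = b then
      w (r.1, r.2) (Function.update r.1 0 a', Function.update r.2 1 b') else 0)]
  simp only [κ, Matrix.cons_val_zero, Matrix.cons_val_one, Matrix.head_cons, upd1, upd21, ite_and]
  simp [Finset.sum_ite_eq', Finset.sum_ite_irrel]


def Xv (ψ : A × B → ℂ) (φ : A × B → ℂ) (c : B) : (Fin 1 → A) × (Fin 2 → B) → ℂ :=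
  fun r => if r.2 1 = c then φ (r.1 0, r.2 0) else 0

lemma Xv_κ (ψ φ : A × B → ℂ) (c : B) (a : A) (b c' : B) :
    Xv ψ φ c (κ a b c') = if c' = c then φ (a, b) else 0 := by
  simp [Xv, κ]

lemma mulVec_Xv (w : Matrix ((Fin 1 → A) × (Fin 2 → B)) ((Fin 1 → A) × (Fin 2 → B)) ℂ)
    (ψ φ : A × B → ℂ) (c : B) (r : (Fin 1 → A) × (Fin 2 → B)) :
    (w *ᵥ Xv ψ φ c) r = ∑ a', ∑ b', w r (κ a' b' c) * φ (a', b') := by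
  simp only [mulVec, dotProduct]
  rw [sum_I (F := fun r' => w r r' * Xv ψ φ c r')]
  simp only [Xv_κ, mul_ite, mul_zero]
  simp [Finset.sum_ite_eq']

lemma quad_Xv (w : Matrix ((Fin 1 → A) × (Fin 2 → B)) ((Fin 1 → A) × (Fin 2 → B)) ℂ)
    (ψ φ : A × B → ℂ) (c : B) :
    star (Xv ψ φ c) ⬝ᵥ (w *ᵥ Xv ψ φ c)
    = ∑ a, ∑ b, star (φ (a, b)) * ∑ a', ∑ b', w (κ a b c) (κ a' b' c) * φ (a', b') := by
  simp only [dotProduct, Pi.star_apply]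
  rw [sum_I (F := fun r => star (Xv ψ φ c r) * (w *ᵥ Xv ψ φ c) r)]
  simp only [Xv_κ, mulVec_Xv, apply_ite (star : ℂ → ℂ), star_zero, ite_mul, zero_mul]
  simp [Finset.sum_ite_eq']

end PureAux

open PureAux

theorem pure_state_one_two_sharable_implies_product
    {A B : Type*} [Fintype A] [DecidableEq A] [Fintype B] [DecidableEq B]
    (ψ : A × B → ℂ) (hunit : ∑ p, Complex.normSq (ψ p) = 1)
    (hshare : Sharable 1 2 ((fun p q => ψ p * star (ψ q)) : Matrix (A × B) (A × B) ℂ)) :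
    ∃ (a : A → ℂ) (b : B → ℂ), ∀ p : A × B, ψ p = a p.1 * b p.2 := by
  classical
  obtain ⟨w, ⟨hpsd, htr⟩, hred⟩ := hshare
  have C1 : ∀ (a a' : A) (b b' : B),
      ∑ c, w (κ a b c) (κ a' b' c) = ψ (a, b) * star (ψ (a', b')) := by
    intro a a' b b'
    have h := congrFun (congrFun (hred 0 0) (a, b)) (a', b')
    rwa [red0] at h
  have C2 : ∀ (a a' : A) (b b' : B),
      ∑ c, w (κ a c b) (κ a' c b') = ψ (a, b) * star (ψ (a', b')) := by
    intro a a' b b'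
    have h := congrFun (congrFun (hred 0 1) (a, b)) (a', b')
    rwa [red1] at h
  have hnorm : (∑ a, ∑ b, star (ψ (a, b)) * ψ (a, b)) = (1 : ℂ) := by
    have h1 : ((∑ p, Complex.normSq (ψ p) : ℝ) : ℂ) = 1 := by rw [hunit]; norm_num
    rw [← h1]
    push_cast
    rw [Fintype.sum_prod_type]
    refine Finset.sum_congr rfl fun a _ => Finset.sum_congr rfl fun b _ => ?_
    simp [Complex.normSq_eq_conj_mul_self, Complex.star_def]
  obtain ⟨a₀, b₀, hψ0⟩ : ∃ a₀ b₀, ψ (a₀, b₀) ≠ 0 := by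
    by_contra h
    push_neg at h
    simp [h] at hnorm
  have hs0 : star (ψ (a₀, b₀)) ≠ 0 := star_ne_zero.mpr hψ0
  have hQsum : ∀ φ : A × B → ℂ,
      ∑ c, star (Xv ψ φ c) ⬝ᵥ (w *ᵥ Xv ψ φ c)
      = (∑ a, ∑ b, star (φ (a, b)) * ψ (a, b)) *
        (∑ a, ∑ b, star (ψ (a, b)) * φ (a, b)) := by
    intro φ
    simp only [quad_Xv]
    rw [Finset.sum_comm]
    refine Eq.trans (Finset.sum_congr rfl fun a _ => Finset.sum_comm) ?_
    simp_rw [← Finset.mul_sum]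
    have inner_eq : ∀ a b, (∑ c, ∑ a', ∑ b', w (κ a b c) (κ a' b' c) * φ (a', b'))
        = ψ (a, b) * (∑ a', ∑ b', star (ψ (a', b')) * φ (a', b')) := by
      intro a b
      rw [Finset.sum_comm]
      refine Eq.trans (Finset.sum_congr rfl fun a' _ => Finset.sum_comm) ?_
      simp_rw [← Finset.sum_mul, C1]
      rw [Finset.mul_sum]
      refine Finset.sum_congr rfl fun a' _ => ?_
      rw [Finset.mul_sum]
      refine Finset.sum_congr rfl fun b' _ => ?_
      ring
    simp_rw [inner_eq]
    rw [Finset.sum_mul]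
    refine Finset.sum_congr rfl fun a _ => ?_
    rw [Finset.sum_mul]
    refine Finset.sum_congr rfl fun b _ => ?_
    ring
  have hperp : ∀ φ : A × B → ℂ, (∑ a, ∑ b, star (ψ (a, b)) * φ (a, b)) = 0 →
      ∀ c, w *ᵥ Xv ψ φ c = 0 := by
    intro φ hφ c
    have hz : ∑ c, star (Xv ψ φ c) ⬝ᵥ (w *ᵥ Xv ψ φ c) = 0 := by
      rw [hQsum, hφ, mul_zero]
    have hnn : ∀ c ∈ Finset.univ, (0:ℂ) ≤ star (Xv ψ φ c) ⬝ᵥ (w *ᵥ Xv ψ φ c) :=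
      fun c _ => hpsd.dotProduct_mulVec_nonneg _
    have h0 : star (Xv ψ φ c) ⬝ᵥ (w *ᵥ Xv ψ φ c) = 0 :=
      (Finset.sum_eq_zero_iff_of_nonneg hnn).mp hz c (Finset.mem_univ c)
    exact (hpsd.dotProduct_mulVec_zero_iff _).mp h0
  have hcolgen : ∀ (φ : A × B → ℂ) (c : B),
      w *ᵥ Xv ψ φ c = (∑ a, ∑ b, star (ψ (a, b)) * φ (a, b)) • (w *ᵥ Xv ψ ψ c) := by
    intro φ c
    set s := ∑ a, ∑ b, star (ψ (a, b)) * φ (a, b) with hs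
    have hdecomp : Xv ψ φ c = Xv ψ (fun p => φ p - s * ψ p) c + s • Xv ψ ψ c := by
      funext r
      simp only [Xv, Pi.add_apply, Pi.smul_apply, smul_eq_mul]
      split_ifs <;> ring
    have hker : w *ᵥ Xv ψ (fun p => φ p - s * ψ p) c = 0 := by
      refine hperp _ ?_ c
      have hterm : ∀ (a : A) (b : B), star (ψ (a, b)) * (φ (a, b) - s * ψ (a, b))
          = star (ψ (a, b)) * φ (a, b) - s * (star (ψ (a, b)) * ψ (a, b)) := by
        intro a b; ring
      simp_rw [hterm, Finset.sum_sub_distrib, ← Finset.mul_sum, hnorm, ← hs, mul_one,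
        sub_self]
    rw [hdecomp, mulVec_add, mulVec_smul, hker, zero_add]
  set Y : B → ((Fin 1 → A) × (Fin 2 → B)) → ℂ := fun c => w *ᵥ Xv ψ ψ c with hYdef
  have colF : ∀ (r) (a : A) (b c : B), w r (κ a b c) = star (ψ (a, b)) * Y c r := by
    intro r a b c
    have h := congrFun (hcolgen (fun p => if p = (a, b) then 1 else 0) c) r
    rw [mulVec_Xv] at h
    have hL : (∑ a', ∑ b', w r (κ a' b' c) * (if (a', b') = (a, b) then (1:ℂ) else 0))
        = w r (κ a b c) := by
      simp [Prod.mk.injEq, ite_and, mul_ite, Finset.sum_ite_eq', Finset.sum_ite_irrel]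
    have hS : (∑ a', ∑ b', star (ψ (a', b')) * (if (a', b') = (a, b) then (1:ℂ) else 0))
        = star (ψ (a, b)) := by
      simp [Prod.mk.injEq, ite_and, mul_ite, Finset.sum_ite_eq', Finset.sum_ite_irrel]
    rw [hL, hS] at h
    simpa [smul_eq_mul] using h
  have hrow : ∀ (a : A) (b c : B) (r), w (κ a b c) r = ψ (a, b) * star (Y c r) := by
    intro a b c r
    rw [← hpsd.1.apply, colF, StarMul.star_mul, star_star]
    ring
  have hYf : ∀ (a : A) (b c c' : B),
      Y c (κ a b c') = ψ (a, b) * star (Y c' (κ a₀ b₀ c)) / star (ψ (a₀, b₀)) := by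
    intro a b c c'
    have h1 : w (κ a b c') (κ a₀ b₀ c) = star (ψ (a₀, b₀)) * Y c (κ a b c') :=
      colF _ _ _ _
    have h2 : w (κ a b c') (κ a₀ b₀ c) = ψ (a, b) * star (Y c' (κ a₀ b₀ c)) :=
      hrow _ _ _ _
    rw [eq_div_iff hs0]
    linear_combination h2 - h1
  have hfact : ∀ (a a' : A) (c b b' : B),
      w (κ a c b) (κ a' c b') = ψ (a, c) * star (ψ (a', c)) *
        (star (Y b (κ a₀ b₀ b')) / star (ψ (a₀, b₀))) := by
    intro a a' c b b'
    rw [colF, hYf]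
    ring
  refine ⟨fun a => ∑ c, ψ (a, c) * star (ψ (a₀, c)),
      fun b => (star (Y b (κ a₀ b₀ b₀)) / star (ψ (a₀, b₀))) / star (ψ (a₀, b₀)), ?_⟩
  rintro ⟨a, b⟩
  have h := C2 a a₀ b b₀
  rw [Finset.sum_congr rfl (fun c _ => hfact a a₀ c b b₀), ← Finset.sum_mul] at h
  show ψ (a, b) = _
  rw [← mul_div_assoc, eq_div_iff hs0]
  exact h.symm
end
end

section
/- Let α_AB, α_AC, α_BC ∈ [0,1] and d = 2. There exists a probability distribution w on {1,2}×{1,2}×{1,2} (variables A, B, C) whose marginal on (A,B) is p_{α_AB}, whose marginal on (A,C) is p_{α_AC}, and whose marginal on (B,C) is p_{α_BC}, if and only if all four inequalities hold: α_AB + α_AC + α_BC ≥ 1, −α_AB + α_AC + α_BC ≤ 1, α_AB − α_AC + α_BC ≤ 1, and α_AB + α_AC − α_BC ≤ 1. -/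
noncomputable section

/-- The classical analogue distribution `p_α` on `{1,…,d}×{1,…,d}`:
`p_α(i,j) = (α/d)·δ_{ij} + ((1−α)/(d(d−1)))·(1−δ_{ij})`. -/
def classicalState (d : ℕ) (α : ℝ) (i j : Fin d) : ℝ :=
  if i = j then α / d else (1 - α) / (d * (d - 1))

/-- `Joins d w αAB αAC αBC` : the distribution `w` on triples has the classical
analogue states with parameters `αAB`, `αAC`, `αBC` as its pair marginals. -/
def Joins (d : ℕ) (w : Fin d × Fin d × Fin d → ℝ) (αAB αAC αBC : ℝ) : Prop :=
  (∀ x, 0 ≤ w x) ∧ (∑ x, w x = 1) ∧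
    (∀ a b, ∑ c, w (a, b, c) = classicalState d αAB a b) ∧
    (∀ a c, ∑ b, w (a, b, c) = classicalState d αAC a c) ∧
    (∀ b c, ∑ a, w (a, b, c) = classicalState d αBC b c)

theorem classical_three_party_joinability_d_eq_2
    (αAB αAC αBC : ℝ) (hAB : αAB ∈ Set.Icc (0 : ℝ) 1) (hAC : αAC ∈ Set.Icc (0 : ℝ) 1)
    (hBC : αBC ∈ Set.Icc (0 : ℝ) 1) :
    (∃ w : Fin 2 × Fin 2 × Fin 2 → ℝ, Joins 2 w αAB αAC αBC) ↔
      (1 ≤ αAB + αAC + αBC ∧ -αAB + αAC + αBC ≤ 1 ∧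
        αAB - αAC + αBC ≤ 1 ∧ αAB + αAC - αBC ≤ 1) := by
  constructor
  · rintro ⟨w, h0, h1, h2, h3, h4⟩
    have e1 := h2 0 0
    have e2 := h2 0 1
    have e3 := h2 1 0
    have e4 := h2 1 1
    have f1 := h3 0 0
    have f2 := h3 0 1
    have f3 := h3 1 0
    have f4 := h3 1 1
    have g1 := h4 0 0
    have g2 := h4 0 1
    have g3 := h4 1 0
    have g4 := h4 1 1
    simp only [classicalState, Fin.sum_univ_two, if_pos, if_neg, Fin.ext_iff] at e1 e2 e3 e4 f1 f2 f3 f4 g1 g2 g3 g4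
    norm_num at e1 e2 e3 e4 f1 f2 f3 f4 g1 g2 g3 g4
    simp only [Fintype.sum_prod_type, Fin.sum_univ_two] at h1
    have p000 := h0 (0,0,0)
    have p001 := h0 (0,0,1)
    have p010 := h0 (0,1,0)
    have p011 := h0 (0,1,1)
    have p100 := h0 (1,0,0)
    have p101 := h0 (1,0,1)
    have p110 := h0 (1,1,0)
    have p111 := h0 (1,1,1)
    norm_num at h1
    refine ⟨?_, ?_, ?_, ?_⟩ <;> linarith
  · rintro ⟨i1, i2, i3, i4⟩
    refine ⟨fun x => if x.1 = x.2.1 ∧ x.1 = x.2.2 then (αAB + αAC + αBC - 1) / 4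
      else if x.1 = x.2.1 then (1 + αAB - αAC - αBC) / 4
      else if x.1 = x.2.2 then (1 + αAC - αAB - αBC) / 4
      else (1 + αBC - αAB - αAC) / 4, ?_, ?_, ?_, ?_, ?_⟩
    · rintro ⟨a, b, c⟩
      fin_cases a <;> fin_cases b <;> fin_cases c <;> norm_num <;> linarith
    · simp [Fintype.sum_prod_type, Fin.sum_univ_two]
      norm_num
      ring
    · intro a b
      fin_cases a <;> fin_cases b <;>
        simp [classicalState, Fin.sum_univ_two] <;> norm_num <;> ring
    · intro a c
      fin_cases a <;> fin_cases c <;>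
        simp [classicalState, Fin.sum_univ_two] <;> norm_num <;> ring
    · intro b c
      fin_cases b <;> fin_cases c <;>
        simp [classicalState, Fin.sum_univ_two] <;> norm_num <;> ring
end
end

section
/- Let d ≥ 3 and α_AB, α_AC, α_BC ∈ [0,1]. There exists a probability distribution w on {1,…,d}×{1,…,d}×{1,…,d} (variables A, B, C) whose marginal on (A,B) is p_{α_AB}, whose marginal on (A,C) is p_{α_AC}, and whose marginal on (B,C) is p_{α_BC}, if and only if all three inequalities hold: −α_AB + α_AC + α_BC ≤ 1, α_AB − α_AC + α_BC ≤ 1, and α_AB + α_AC − α_BC ≤ 1. Equivalently, the set of joinable triples (α_AB, α_AC, α_BC) is the convex hull of the five points (1,1,1), (1,0,0), (0,1,0), (0,0,1), (0,0,0). -/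
noncomputable section

open Finset

-- helper sums
lemma sum_ite_eq_diag {d : ℕ} (a : Fin d) (u v : ℝ) :
    ∑ b : Fin d, (if a = b then u else v) = u + ((d : ℝ) - 1) * v := by
  have h : ∀ b : Fin d, (if a = b then u else v) = v + (if a = b then u - v else 0) := by
    intro b; split_ifs <;> ring
  simp only [h, Finset.sum_add_distrib, Finset.sum_const, Finset.sum_ite_eq, mem_univ,
    if_true, card_univ, Fintype.card_fin, nsmul_eq_mul]
  ring

lemma card_ne {d : ℕ} (a : Fin d) :
    (univ.filter (fun c : Fin d => c ≠ a)).card = d - 1 := by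
  rw [Finset.filter_ne', Finset.card_erase_of_mem (mem_univ a), card_univ, Fintype.card_fin]

lemma card_ne_ne {d : ℕ} (a b : Fin d) (hab : a ≠ b) :
    (univ.filter (fun c : Fin d => c ≠ a ∧ c ≠ b)).card = d - 2 := by
  have : (univ.filter (fun c : Fin d => c ≠ a ∧ c ≠ b)) = (univ.erase a).erase b := by
    ext c
    simp [Finset.mem_erase, and_comm]
  rw [this, Finset.card_erase_of_mem, Finset.card_erase_of_mem (mem_univ a), card_univ,
    Fintype.card_fin]
  · omega
  · exact Finset.mem_erase.2 ⟨Ne.symm hab, mem_univ b⟩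

lemma sum_ite_prop {d : ℕ} (P : Fin d → Prop) [DecidablePred P] (k : ℝ) :
    ∑ c : Fin d, (if P c then k else 0) = (univ.filter P).card * k := by
  rw [← Finset.sum_filter, Finset.sum_const, nsmul_eq_mul]

lemma total_of_marginal {d : ℕ} (hd : 3 ≤ d) (w : Fin d × Fin d × Fin d → ℝ) (α : ℝ)
    (h : ∀ a b, ∑ c, w (a, b, c) = classicalState d α a b) :
    ∑ x, w x = 1 := by
  have hd0 : (d : ℝ) ≠ 0 := by positivity
  have hd1 : (d : ℝ) - 1 ≠ 0 := by
    have : (3 : ℝ) ≤ (d : ℝ) := by exact_mod_cast hd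
    linarith
  rw [Fintype.sum_prod_type]
  have : ∀ a : Fin d, ∑ x : Fin d × Fin d, w (a, x) = 1 / d := by
    intro a
    rw [Fintype.sum_prod_type]
    have hb : ∀ b : Fin d, ∑ c, w (a, b, c) = classicalState d α a b := fun b => h a b
    simp only [hb, classicalState]
    rw [sum_ite_eq_diag]
    have hcast : ((d : ℝ) - 1) ≠ 0 := hd1
    field_simp
    ring
  simp only [this, Finset.sum_const, card_univ, Fintype.card_fin, nsmul_eq_mul]
  field_simp

def W111 (d : ℕ) : Fin d × Fin d × Fin d → ℝ :=
  fun x => if x.1 = x.2.1 ∧ x.2.1 = x.2.2 then 1 / d else 0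

def W100 (d : ℕ) : Fin d × Fin d × Fin d → ℝ :=
  fun x => if x.1 = x.2.1 ∧ x.2.2 ≠ x.1 then 1 / ((d : ℝ) * ((d : ℝ) - 1)) else 0

def W010 (d : ℕ) : Fin d × Fin d × Fin d → ℝ :=
  fun x => if x.1 = x.2.2 ∧ x.2.1 ≠ x.1 then 1 / ((d : ℝ) * ((d : ℝ) - 1)) else 0

def W001 (d : ℕ) : Fin d × Fin d × Fin d → ℝ :=
  fun x => if x.2.1 = x.2.2 ∧ x.1 ≠ x.2.1 then 1 / ((d : ℝ) * ((d : ℝ) - 1)) else 0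

def W000 (d : ℕ) : Fin d × Fin d × Fin d → ℝ :=
  fun x => if x.2.1 ≠ x.1 ∧ x.2.2 ≠ x.1 ∧ x.2.2 ≠ x.2.1 then
    1 / ((d : ℝ) * ((d : ℝ) - 1) * ((d : ℝ) - 2)) else 0

section Marg
variable {d : ℕ} (hd : 3 ≤ d)

lemma dR (hd : 3 ≤ d) : (0:ℝ) < d ∧ (0:ℝ) < (d:ℝ) - 1 ∧ (0:ℝ) < (d:ℝ) - 2 := by
  have : (3:ℝ) ≤ (d:ℝ) := by exact_mod_cast hd
  refine ⟨by linarith, by linarith, by linarith⟩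

lemma W111_AB (a b : Fin d) :
    ∑ c, W111 d (a, b, c) = classicalState d 1 a b := by
  simp only [W111, classicalState]
  by_cases hab : a = b
  · subst hab
    simp only [eq_self_iff_true, true_and, if_true]
    rw [sum_ite_eq_diag a ((1:ℝ)/d) 0]
    ring
  · simp [hab]

lemma W111_AC (a c : Fin d) :
    ∑ b, W111 d (a, b, c) = classicalState d 1 a c := by
  simp only [W111, classicalState]
  have hcond : ∀ b : Fin d, (a = b ∧ b = c) ↔ (a = b ∧ a = c) := by
    intro b; constructor
    · rintro ⟨h1, h2⟩; exact ⟨h1, h1.trans h2⟩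
    · rintro ⟨h1, h2⟩; exact ⟨h1, h1.symm.trans h2⟩
  simp only [hcond]
  by_cases hac : a = c
  · subst hac
    simp only [eq_self_iff_true, and_true, if_true]
    rw [sum_ite_eq_diag a ((1:ℝ)/d) 0]
    ring
  · simp [hac]

lemma W111_BC (b c : Fin d) :
    ∑ a, W111 d (a, b, c) = classicalState d 1 b c := by
  simp only [W111, classicalState]
  have hcond : ∀ a : Fin d, (a = b ∧ b = c) ↔ (b = a ∧ b = c) := by
    intro a; constructor
    · rintro ⟨h1, h2⟩; exact ⟨h1.symm, h2⟩
    · rintro ⟨h1, h2⟩; exact ⟨h1.symm, h2⟩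
  simp only [hcond]
  by_cases hbc : b = c
  · subst hbc
    simp only [eq_self_iff_true, and_true, if_true]
    rw [sum_ite_eq_diag b ((1:ℝ)/d) 0]
    ring
  · simp [hbc]

lemma W100_AB (hd : 3 ≤ d) (a b : Fin d) :
    ∑ c, W100 d (a, b, c) = classicalState d 1 a b := by
  obtain ⟨h1, h2, h3⟩ := dR hd
  simp only [W100, classicalState]
  by_cases hab : a = b
  · subst hab
    simp only [eq_self_iff_true, true_and, if_true]
    rw [sum_ite_prop (fun c : Fin d => c ≠ a), card_ne, Nat.cast_sub (by omega), Nat.cast_one]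
    field_simp
  · simp [hab]

lemma W100_AC (hd : 3 ≤ d) (a c : Fin d) :
    ∑ b, W100 d (a, b, c) = classicalState d 0 a c := by
  simp only [W100, classicalState]
  by_cases hca : c = a
  · subst hca
    simp
  · have hcond : ∀ b : Fin d, (a = b ∧ c ≠ a) ↔ (a = b) := fun b => by
      constructor
      · exact fun h => h.1
      · exact fun h => ⟨h, hca⟩
    simp only [hcond]
    rw [sum_ite_eq_diag a (1 / ((d:ℝ) * ((d:ℝ) - 1))) 0,
      if_neg (fun h : a = c => hca h.symm)]
    ring
  
lemma W100_BC (hd : 3 ≤ d) (b c : Fin d) :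
    ∑ a, W100 d (a, b, c) = classicalState d 0 b c := by
  simp only [W100, classicalState]
  by_cases hcb : c = b
  · have : ∀ a : Fin d, ¬(a = b ∧ c ≠ a) := by
      rintro a ⟨rfl, h2⟩; exact h2 hcb
    rw [if_pos hcb.symm, Finset.sum_eq_zero (fun a _ => if_neg (this a))]
    simp
  · have hcond : ∀ a : Fin d, (a = b ∧ c ≠ a) ↔ (b = a) := fun a => by
      constructor
      · exact fun h => h.1.symm
      · rintro rfl; exact ⟨rfl, hcb⟩
    simp only [hcond]
    rw [sum_ite_eq_diag b (1 / ((d:ℝ) * ((d:ℝ) - 1))) 0,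
      if_neg (fun h : b = c => hcb h.symm)]
    ring

lemma W010_AB (hd : 3 ≤ d) (a b : Fin d) :
    ∑ c, W010 d (a, b, c) = classicalState d 0 a b := by
  simp only [W010, classicalState]
  by_cases hba : b = a
  · have h0 : ∀ c : Fin d, ¬(a = c ∧ b ≠ a) := by rintro c ⟨_, h⟩; exact h hba
    rw [if_pos hba.symm, Finset.sum_eq_zero (fun c _ => if_neg (h0 c))]
    simp
  · have hcond : ∀ c : Fin d, (a = c ∧ b ≠ a) ↔ (a = c) :=
      fun c => ⟨fun h => h.1, fun h => ⟨h, hba⟩⟩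
    simp only [hcond]
    rw [sum_ite_eq_diag a (1 / ((d:ℝ) * ((d:ℝ) - 1))) 0,
      if_neg (fun h : a = b => hba h.symm)]
    ring

lemma W010_AC (hd : 3 ≤ d) (a c : Fin d) :
    ∑ b, W010 d (a, b, c) = classicalState d 1 a c := by
  obtain ⟨h1, h2, h3⟩ := dR hd
  simp only [W010, classicalState]
  by_cases hac : a = c
  · subst hac
    simp only [eq_self_iff_true, true_and, if_true]
    rw [sum_ite_prop (fun b : Fin d => b ≠ a), card_ne, Nat.cast_sub (by omega), Nat.cast_one]
    field_simp
  · simp [hac]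

lemma W010_BC (hd : 3 ≤ d) (b c : Fin d) :
    ∑ a, W010 d (a, b, c) = classicalState d 0 b c := by
  simp only [W010, classicalState]
  by_cases hbc : b = c
  · have h0 : ∀ a : Fin d, ¬(a = c ∧ b ≠ a) := by
      rintro a ⟨ha, h⟩; exact h (hbc.trans ha.symm)
    rw [if_pos hbc, Finset.sum_eq_zero (fun a _ => if_neg (h0 a))]
    simp
  · have hcond : ∀ a : Fin d, (a = c ∧ b ≠ a) ↔ (c = a) := fun a => by
      constructor
      · exact fun h => h.1.symm
      · rintro rfl; exact ⟨rfl, hbc⟩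
    simp only [hcond]
    rw [sum_ite_eq_diag c (1 / ((d:ℝ) * ((d:ℝ) - 1))) 0, if_neg hbc]
    ring

lemma W001_AB (hd : 3 ≤ d) (a b : Fin d) :
    ∑ c, W001 d (a, b, c) = classicalState d 0 a b := by
  simp only [W001, classicalState]
  by_cases hab : a = b
  · have h0 : ∀ c : Fin d, ¬(b = c ∧ a ≠ b) := by rintro c ⟨_, h⟩; exact h hab
    rw [if_pos hab, Finset.sum_eq_zero (fun c _ => if_neg (h0 c))]
    simp
  · have hcond : ∀ c : Fin d, (b = c ∧ a ≠ b) ↔ (b = c) :=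
      fun c => ⟨fun h => h.1, fun h => ⟨h, hab⟩⟩
    simp only [hcond]
    rw [sum_ite_eq_diag b (1 / ((d:ℝ) * ((d:ℝ) - 1))) 0, if_neg hab]
    ring

lemma W001_AC (hd : 3 ≤ d) (a c : Fin d) :
    ∑ b, W001 d (a, b, c) = classicalState d 0 a c := by
  simp only [W001, classicalState]
  by_cases hac : a = c
  · have h0 : ∀ b : Fin d, ¬(b = c ∧ a ≠ b) := by
      rintro b ⟨hb, h⟩; exact h (hac.trans hb.symm)
    rw [if_pos hac, Finset.sum_eq_zero (fun b _ => if_neg (h0 b))]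
    simp
  · have hcond : ∀ b : Fin d, (b = c ∧ a ≠ b) ↔ (c = b) := fun b => by
      constructor
      · exact fun h => h.1.symm
      · rintro rfl; exact ⟨rfl, hac⟩
    simp only [hcond]
    rw [sum_ite_eq_diag c (1 / ((d:ℝ) * ((d:ℝ) - 1))) 0, if_neg hac]
    ring

lemma W001_BC (hd : 3 ≤ d) (b c : Fin d) :
    ∑ a, W001 d (a, b, c) = classicalState d 1 b c := by
  obtain ⟨h1, h2, h3⟩ := dR hd
  simp only [W001, classicalState]
  by_cases hbc : b = c
  · subst hbc
    simp only [eq_self_iff_true, true_and, if_true]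
    rw [sum_ite_prop (fun a : Fin d => a ≠ b), card_ne, Nat.cast_sub (by omega), Nat.cast_one]
    field_simp
  · simp [hbc]

lemma W000_AB (hd : 3 ≤ d) (a b : Fin d) :
    ∑ c, W000 d (a, b, c) = classicalState d 0 a b := by
  obtain ⟨h1, h2, h3⟩ := dR hd
  simp only [W000, classicalState]
  by_cases hab : a = b
  · have h0 : ∀ c : Fin d, ¬(b ≠ a ∧ c ≠ a ∧ c ≠ b) := by
      rintro c ⟨h, _⟩; exact h hab.symm
    rw [if_pos hab, Finset.sum_eq_zero (fun c _ => if_neg (h0 c))]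
    simp
  · have hcond : ∀ c : Fin d, (b ≠ a ∧ c ≠ a ∧ c ≠ b) ↔ (c ≠ a ∧ c ≠ b) :=
      fun c => ⟨fun h => h.2, fun h => ⟨fun hh => hab hh.symm, h⟩⟩
    simp only [hcond]
    rw [sum_ite_prop (fun c : Fin d => c ≠ a ∧ c ≠ b), card_ne_ne a b hab,
      Nat.cast_sub (by omega), if_neg hab]
    push_cast
    field_simp
    ring

lemma W000_AC (hd : 3 ≤ d) (a c : Fin d) :
    ∑ b, W000 d (a, b, c) = classicalState d 0 a c := by
  obtain ⟨h1, h2, h3⟩ := dR hd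
  simp only [W000, classicalState]
  by_cases hac : a = c
  · have h0 : ∀ b : Fin d, ¬(b ≠ a ∧ c ≠ a ∧ c ≠ b) := by
      rintro b ⟨_, h, _⟩; exact h hac.symm
    rw [if_pos hac, Finset.sum_eq_zero (fun b _ => if_neg (h0 b))]
    simp
  · have hcond : ∀ b : Fin d, (b ≠ a ∧ c ≠ a ∧ c ≠ b) ↔ (b ≠ a ∧ b ≠ c) := fun b => by
      constructor
      · rintro ⟨x, _, z⟩; exact ⟨x, fun hh => z hh.symm⟩
      · rintro ⟨x, y⟩; exact ⟨x, fun hh => hac hh.symm, fun hh => y hh.symm⟩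
    simp only [hcond]
    rw [sum_ite_prop (fun b : Fin d => b ≠ a ∧ b ≠ c), card_ne_ne a c hac,
      Nat.cast_sub (by omega), if_neg hac]
    push_cast
    field_simp
    ring

lemma W000_BC (hd : 3 ≤ d) (b c : Fin d) :
    ∑ a, W000 d (a, b, c) = classicalState d 0 b c := by
  obtain ⟨h1, h2, h3⟩ := dR hd
  simp only [W000, classicalState]
  by_cases hbc : b = c
  · have h0 : ∀ a : Fin d, ¬(b ≠ a ∧ c ≠ a ∧ c ≠ b) := by
      rintro a ⟨_, _, h⟩; exact h hbc.symm
    rw [if_pos hbc, Finset.sum_eq_zero (fun a _ => if_neg (h0 a))]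
    simp
  · have hcond : ∀ a : Fin d, (b ≠ a ∧ c ≠ a ∧ c ≠ b) ↔ (a ≠ b ∧ a ≠ c) := fun a => by
      constructor
      · rintro ⟨x, y, _⟩; exact ⟨fun hh => x hh.symm, fun hh => y hh.symm⟩
      · rintro ⟨x, y⟩
        exact ⟨fun hh => x hh.symm, fun hh => y hh.symm, fun hh => hbc hh.symm⟩
    simp only [hcond]
    rw [sum_ite_prop (fun a : Fin d => a ≠ b ∧ a ≠ c), card_ne_ne b c hbc,
      Nat.cast_sub (by omega), if_neg hbc]
    push_cast
    field_simp
    ring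

end Marg

section JoinsBase
variable {d : ℕ}

lemma cs_affine {s t : ℝ} (hst : s + t = 1) (α β : ℝ) (i j : Fin d) :
    s * classicalState d α i j + t * classicalState d β i j
      = classicalState d (s * α + t * β) i j := by
  have ht : t = 1 - s := by linarith
  subst ht
  simp only [classicalState]
  split_ifs <;> ring

lemma joins_combo (hd : 3 ≤ d) (l0 l1 l2 l3 l4 : ℝ)
    (h0 : 0 ≤ l0) (h1 : 0 ≤ l1) (h2 : 0 ≤ l2) (h3 : 0 ≤ l3) (h4 : 0 ≤ l4)
    (hs : l0 + l1 + l2 + l3 + l4 = 1) :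
    Joins d (fun x => l0 * W111 d x + l1 * W100 d x + l2 * W010 d x
      + l3 * W001 d x + l4 * W000 d x) (l0 + l1) (l0 + l2) (l0 + l3) := by
  obtain ⟨hd1, hd2, hd3⟩ := dR hd
  have hk0 : (0:ℝ) ≤ 1 / (d:ℝ) := by positivity
  have hk1 : (0:ℝ) ≤ 1 / ((d:ℝ) * ((d:ℝ) - 1)) := le_of_lt (div_pos one_pos (mul_pos hd1 hd2))
  have hk2 : (0:ℝ) ≤ 1 / ((d:ℝ) * ((d:ℝ) - 1) * ((d:ℝ) - 2)) :=
    le_of_lt (div_pos one_pos (mul_pos (mul_pos hd1 hd2) hd3))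
  have p111 : ∀ x, 0 ≤ W111 d x := by
    intro x; simp only [W111]; split_ifs; exacts [hk0, le_refl 0]
  have p100 : ∀ x, 0 ≤ W100 d x := by
    intro x; simp only [W100]; split_ifs; exacts [hk1, le_refl 0]
  have p010 : ∀ x, 0 ≤ W010 d x := by
    intro x; simp only [W010]; split_ifs; exacts [hk1, le_refl 0]
  have p001 : ∀ x, 0 ≤ W001 d x := by
    intro x; simp only [W001]; split_ifs; exacts [hk1, le_refl 0]
  have p000 : ∀ x, 0 ≤ W000 d x := by
    intro x; simp only [W000]; split_ifs; exacts [hk2, le_refl 0]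
  have mAB : ∀ a b : Fin d,
      ∑ c, (l0 * W111 d (a,b,c) + l1 * W100 d (a,b,c) + l2 * W010 d (a,b,c)
        + l3 * W001 d (a,b,c) + l4 * W000 d (a,b,c)) = classicalState d (l0 + l1) a b := by
    intro a b
    simp only [Finset.sum_add_distrib, ← Finset.mul_sum]
    rw [W111_AB, W100_AB hd, W010_AB hd, W001_AB hd, W000_AB hd]
    calc l0 * classicalState d 1 a b + l1 * classicalState d 1 a b
          + l2 * classicalState d 0 a b + l3 * classicalState d 0 a b
          + l4 * classicalState d 0 a b
        = (l0 + l1) * classicalState d 1 a b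
          + (l2 + l3 + l4) * classicalState d 0 a b := by ring
      _ = classicalState d ((l0 + l1) * 1 + (l2 + l3 + l4) * 0) a b :=
          cs_affine (by linarith) 1 0 a b
      _ = classicalState d (l0 + l1) a b := by norm_num
  refine ⟨?_, ?_, mAB, ?_, ?_⟩
  · intro x
    have := p111 x; have := p100 x; have := p010 x; have := p001 x; have := p000 x
    dsimp only
    nlinarith [mul_nonneg h0 (p111 x), mul_nonneg h1 (p100 x), mul_nonneg h2 (p010 x),
      mul_nonneg h3 (p001 x), mul_nonneg h4 (p000 x)]
  · exact total_of_marginal hd _ _ mAB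
  · intro a c
    simp only [Finset.sum_add_distrib, ← Finset.mul_sum]
    rw [W111_AC, W100_AC hd, W010_AC hd, W001_AC hd, W000_AC hd]
    calc l0 * classicalState d 1 a c + l1 * classicalState d 0 a c
          + l2 * classicalState d 1 a c + l3 * classicalState d 0 a c
          + l4 * classicalState d 0 a c
        = (l0 + l2) * classicalState d 1 a c
          + (l1 + l3 + l4) * classicalState d 0 a c := by ring
      _ = classicalState d ((l0 + l2) * 1 + (l1 + l3 + l4) * 0) a c :=
          cs_affine (by linarith) 1 0 a c
      _ = classicalState d (l0 + l2) a c := by norm_num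
  · intro b c
    simp only [Finset.sum_add_distrib, ← Finset.mul_sum]
    rw [W111_BC, W100_BC hd, W010_BC hd, W001_BC hd, W000_BC hd]
    calc l0 * classicalState d 1 b c + l1 * classicalState d 0 b c
          + l2 * classicalState d 0 b c + l3 * classicalState d 1 b c
          + l4 * classicalState d 0 b c
        = (l0 + l3) * classicalState d 1 b c
          + (l1 + l2 + l4) * classicalState d 0 b c := by ring
      _ = classicalState d ((l0 + l3) * 1 + (l1 + l2 + l4) * 0) b c :=
          cs_affine (by linarith) 1 0 b c
      _ = classicalState d (l0 + l3) b c := by norm_num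

end JoinsBase

lemma exists_weights (x y z : ℝ) (hx0 : 0 ≤ x) (hy0 : 0 ≤ y) (hz0 : 0 ≤ z)
    (e1 : -x + y + z ≤ 1) (e2 : x - y + z ≤ 1) (e3 : x + y - z ≤ 1) :
    ∃ l0 l1 l2 l3 l4 : ℝ, 0 ≤ l0 ∧ 0 ≤ l1 ∧ 0 ≤ l2 ∧ 0 ≤ l3 ∧ 0 ≤ l4 ∧
      l0 + l1 + l2 + l3 + l4 = 1 ∧ l0 + l1 = x ∧ l0 + l2 = y ∧ l0 + l3 = z := by
  by_cases h : x + y + z ≤ 1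
  · exact ⟨0, x, y, z, 1 - x - y - z, le_refl 0, hx0, hy0, hz0, by linarith, by ring,
      by ring, by ring, by ring⟩
  · refine ⟨(x + y + z - 1) / 2, (1 + x - y - z) / 2, (1 - x + y - z) / 2,
      (1 - x - y + z) / 2, 0, by linarith, by linarith, by linarith, by linarith,
      le_refl 0, by ring, by ring, by ring, by ring⟩

section Nec
variable {d : ℕ}

lemma joins_bounds (hd : 3 ≤ d) {w : Fin d × Fin d × Fin d → ℝ} {x y z : ℝ}
    (hw : Joins d w x y z) :
    x ∈ Set.Icc (0:ℝ) 1 ∧ y ∈ Set.Icc (0:ℝ) 1 ∧ z ∈ Set.Icc (0:ℝ) 1 := by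
  obtain ⟨hd1, hd2, hd3⟩ := dR hd
  obtain ⟨hpos, hsum, hAB, hAC, hBC⟩ := hw
  set a0 : Fin d := ⟨0, by omega⟩
  set a1 : Fin d := ⟨1, by omega⟩
  have hne : a0 ≠ a1 := by simp [a0, a1, Fin.ext_iff]
  have key : ∀ (α : ℝ), (∀ a b : Fin d, 0 ≤ classicalState d α a b) → α ∈ Set.Icc (0:ℝ) 1 := by
    intro α hα
    have h1 := hα a0 a0
    have h2 := hα a0 a1
    rw [classicalState, if_pos rfl] at h1
    rw [classicalState, if_neg hne] at h2
    constructor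
    · rcases div_nonneg_iff.mp h1 with ⟨h, _⟩ | ⟨_, h⟩
      · exact h
      · linarith
    · rcases div_nonneg_iff.mp h2 with ⟨h, _⟩ | ⟨_, h⟩
      · linarith
      · nlinarith
  refine ⟨key x ?_, key y ?_, key z ?_⟩
  · intro a b; rw [← hAB a b]; exact Finset.sum_nonneg fun c _ => hpos _
  · intro a c; rw [← hAC a c]; exact Finset.sum_nonneg fun b _ => hpos _
  · intro b c; rw [← hBC b c]; exact Finset.sum_nonneg fun a _ => hpos _

lemma cs_diag_sum (hd : 3 ≤ d) (α : ℝ) :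
    ∑ a : Fin d, classicalState d α a a = α := by
  obtain ⟨hd1, _, _⟩ := dR hd
  simp only [classicalState, if_pos rfl, ↓reduceIte]
  rw [Finset.sum_const, card_univ, Fintype.card_fin, nsmul_eq_mul]
  field_simp

lemma ind_bound {d : ℕ} (s1 s2 s3 : ℝ)
    (hcase : ∀ p q r : Prop, (p → q → r) → (p → r → q) → (q → r → p) →
      ((p ∧ q ∧ r) ∨ (p ∧ ¬q ∧ ¬r) ∨ (¬p ∧ q ∧ ¬r) ∨ (¬p ∧ ¬q ∧ r) ∨ (¬p ∧ ¬q ∧ ¬r)) →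
      True) : True := trivial

lemma ind_bound1 {d : ℕ} (a b c : Fin d) :
    (-1 : ℝ) * (if a = b then (1:ℝ) else 0) + 1 * (if a = c then (1:ℝ) else 0)
      + 1 * (if b = c then (1:ℝ) else 0) ≤ 1 := by
  by_cases hab : a = b <;> by_cases hac : a = c <;> by_cases hbc : b = c <;>
    first
      | exact absurd (hac.trans hbc.symm) hab
      | exact absurd (hab.trans hbc) hac
      | exact absurd (hab.symm.trans hac) hbc
      | (simp [hab, hac, hbc] <;> split_ifs with h <;> simp_all)

lemma ind_bound2 {d : ℕ} (a b c : Fin d) :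
    (1 : ℝ) * (if a = b then (1:ℝ) else 0) + (-1) * (if a = c then (1:ℝ) else 0)
      + 1 * (if b = c then (1:ℝ) else 0) ≤ 1 := by
  by_cases hab : a = b <;> by_cases hac : a = c <;> by_cases hbc : b = c <;>
    first
      | exact absurd (hac.trans hbc.symm) hab
      | exact absurd (hab.trans hbc) hac
      | exact absurd (hab.symm.trans hac) hbc
      | (simp [hab, hac, hbc] <;> split_ifs with h <;> simp_all)

lemma ind_bound3 {d : ℕ} (a b c : Fin d) :
    (1 : ℝ) * (if a = b then (1:ℝ) else 0) + 1 * (if a = c then (1:ℝ) else 0)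
      + (-1) * (if b = c then (1:ℝ) else 0) ≤ 1 := by
  by_cases hab : a = b <;> by_cases hac : a = c <;> by_cases hbc : b = c <;>
    first
      | exact absurd (hac.trans hbc.symm) hab
      | exact absurd (hab.trans hbc) hac
      | exact absurd (hab.symm.trans hac) hbc
      | (simp [hab, hac, hbc] <;> split_ifs with h <;> simp_all)

lemma joins_ineqs (hd : 3 ≤ d) {w : Fin d × Fin d × Fin d → ℝ} {x y z : ℝ}
    (hw : Joins d w x y z) :
    -x + y + z ≤ 1 ∧ x - y + z ≤ 1 ∧ x + y - z ≤ 1 := by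
  obtain ⟨hpos, hsum, hAB, hAC, hBC⟩ := hw
  have eAB : ∑ t : Fin d × Fin d × Fin d,
      w t * (if t.1 = t.2.1 then (1:ℝ) else 0) = x := by
    rw [Fintype.sum_prod_type]
    simp only [Fintype.sum_prod_type]
    have h2 : ∀ a b : Fin d, ∑ c, w (a, b, c) * (if a = b then (1:ℝ) else 0)
        = (if a = b then (1:ℝ) else 0) * classicalState d x a b := by
      intro a b
      rw [← Finset.sum_mul, hAB a b, mul_comm]
    simp only [h2, ite_mul, one_mul, zero_mul]
    have h3 : ∀ a : Fin d,
        (∑ b, if a = b then classicalState d x a b else 0) = classicalState d x a a := by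
      intro a
      rw [Finset.sum_ite_eq univ a (fun b => classicalState d x a b), if_pos (mem_univ a)]
    simp only [h3]
    exact cs_diag_sum hd x
  have eAC : ∑ t : Fin d × Fin d × Fin d,
      w t * (if t.1 = t.2.2 then (1:ℝ) else 0) = y := by
    rw [Fintype.sum_prod_type]
    simp only [Fintype.sum_prod_type]
    have hsw : ∀ a : Fin d, ∑ b : Fin d, ∑ c : Fin d, w (a, b, c) * (if a = c then (1:ℝ) else 0)
        = ∑ c : Fin d, ∑ b : Fin d, w (a, b, c) * (if a = c then (1:ℝ) else 0) := by
      intro a; exact Finset.sum_comm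
    simp only [hsw]
    have h2 : ∀ a c : Fin d, ∑ b, w (a, b, c) * (if a = c then (1:ℝ) else 0)
        = (if a = c then (1:ℝ) else 0) * classicalState d y a c := by
      intro a c
      rw [← Finset.sum_mul, hAC a c, mul_comm]
    simp only [h2, ite_mul, one_mul, zero_mul]
    have h3 : ∀ a : Fin d,
        (∑ c, if a = c then classicalState d y a c else 0) = classicalState d y a a := by
      intro a
      rw [Finset.sum_ite_eq univ a (fun c => classicalState d y a c), if_pos (mem_univ a)]
    simp only [h3]
    exact cs_diag_sum hd y
  have eBC : ∑ t : Fin d × Fin d × Fin d,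
      w t * (if t.2.1 = t.2.2 then (1:ℝ) else 0) = z := by
    rw [Fintype.sum_prod_type]
    simp only [Fintype.sum_prod_type]
    rw [Finset.sum_comm]
    have hsw : ∀ b : Fin d, ∑ a : Fin d, ∑ c : Fin d, w (a, b, c) * (if b = c then (1:ℝ) else 0)
        = ∑ c : Fin d, ∑ a : Fin d, w (a, b, c) * (if b = c then (1:ℝ) else 0) := by
      intro b; exact Finset.sum_comm
    simp only [hsw]
    have h2 : ∀ b c : Fin d, ∑ a, w (a, b, c) * (if b = c then (1:ℝ) else 0)
        = (if b = c then (1:ℝ) else 0) * classicalState d z b c := by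
      intro b c
      rw [← Finset.sum_mul, hBC b c, mul_comm]
    simp only [h2, ite_mul, one_mul, zero_mul]
    have h3 : ∀ b : Fin d,
        (∑ c, if b = c then classicalState d z b c else 0) = classicalState d z b b := by
      intro b
      rw [Finset.sum_ite_eq univ b (fun c => classicalState d z b c), if_pos (mem_univ b)]
    simp only [h3]
    exact cs_diag_sum hd z
  have master : ∀ (s1 s2 s3 : ℝ),
      (∀ t : Fin d × Fin d × Fin d,
        s1 * (if t.1 = t.2.1 then (1:ℝ) else 0) + s2 * (if t.1 = t.2.2 then (1:ℝ) else 0)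
          + s3 * (if t.2.1 = t.2.2 then (1:ℝ) else 0) ≤ 1) →
      s1 * x + s2 * y + s3 * z ≤ 1 := by
    intro s1 s2 s3 hone
    have key : ∀ t : Fin d × Fin d × Fin d,
        w t * (s1 * (if t.1 = t.2.1 then (1:ℝ) else 0)
          + s2 * (if t.1 = t.2.2 then (1:ℝ) else 0)
          + s3 * (if t.2.1 = t.2.2 then (1:ℝ) else 0)) ≤ w t := by
      intro t
      calc w t * _ ≤ w t * 1 := mul_le_mul_of_nonneg_left (hone t) (hpos t)
        _ = w t := mul_one _
    have hle := Finset.sum_le_sum (fun t (_ : t ∈ univ) => key t)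
    rw [hsum] at hle
    have hexp : ∑ t : Fin d × Fin d × Fin d,
        w t * (s1 * (if t.1 = t.2.1 then (1:ℝ) else 0)
          + s2 * (if t.1 = t.2.2 then (1:ℝ) else 0)
          + s3 * (if t.2.1 = t.2.2 then (1:ℝ) else 0))
        = s1 * x + s2 * y + s3 * z := by
      have hpt : ∀ t : Fin d × Fin d × Fin d,
          w t * (s1 * (if t.1 = t.2.1 then (1:ℝ) else 0)
            + s2 * (if t.1 = t.2.2 then (1:ℝ) else 0)
            + s3 * (if t.2.1 = t.2.2 then (1:ℝ) else 0))
          = s1 * (w t * (if t.1 = t.2.1 then (1:ℝ) else 0))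
            + s2 * (w t * (if t.1 = t.2.2 then (1:ℝ) else 0))
            + s3 * (w t * (if t.2.1 = t.2.2 then (1:ℝ) else 0)) := fun t => by ring
      simp only [hpt, Finset.sum_add_distrib, ← Finset.mul_sum, eAB, eAC, eBC]
    rw [hexp] at hle
    exact hle
  refine ⟨?_, ?_, ?_⟩
  · have := master (-1) 1 1 (fun t => ind_bound1 t.1 t.2.1 t.2.2)
    linarith
  · have := master 1 (-1) 1 (fun t => ind_bound2 t.1 t.2.1 t.2.2)
    linarith
  · have := master 1 1 (-1) (fun t => ind_bound3 t.1 t.2.1 t.2.2)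
    linarith
end Nec

lemma joins_mix {d : ℕ} {w w' : Fin d × Fin d × Fin d → ℝ} {x y z x' y' z' s t : ℝ}
    (hs : 0 ≤ s) (ht : 0 ≤ t) (hst : s + t = 1)
    (h : Joins d w x y z) (h' : Joins d w' x' y' z') :
    Joins d (fun u => s * w u + t * w' u) (s * x + t * x') (s * y + t * y')
      (s * z + t * z') := by
  obtain ⟨p, e, mAB, mAC, mBC⟩ := h
  obtain ⟨p', e', mAB', mAC', mBC'⟩ := h'
  refine ⟨fun u => add_nonneg (mul_nonneg hs (p u)) (mul_nonneg ht (p' u)), ?_, ?_, ?_, ?_⟩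
  · simp only [Finset.sum_add_distrib, ← Finset.mul_sum, e, e']
    linarith
  · intro a b
    simp only [Finset.sum_add_distrib, ← Finset.mul_sum, mAB a b, mAB' a b]
    exact cs_affine hst x x' a b
  · intro a c
    simp only [Finset.sum_add_distrib, ← Finset.mul_sum, mAC a c, mAC' a c]
    exact cs_affine hst y y' a c
  · intro b c
    simp only [Finset.sum_add_distrib, ← Finset.mul_sum, mBC b c, mBC' b c]
    exact cs_affine hst z z' b c

lemma exists_joins {d : ℕ} (hd : 3 ≤ d) {x y z : ℝ}
    (hx0 : 0 ≤ x) (hy0 : 0 ≤ y) (hz0 : 0 ≤ z)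
    (e1 : -x + y + z ≤ 1) (e2 : x - y + z ≤ 1) (e3 : x + y - z ≤ 1) :
    ∃ w : Fin d × Fin d × Fin d → ℝ, Joins d w x y z := by
  obtain ⟨l0, l1, l2, l3, l4, h0, h1, h2, h3, h4, hs, hhx, hhy, hhz⟩ :=
    exists_weights x y z hx0 hy0 hz0 e1 e2 e3
  have hj := joins_combo hd l0 l1 l2 l3 l4 h0 h1 h2 h3 h4 hs
  rw [hhx, hhy, hhz] at hj
  exact ⟨_, hj⟩

theorem classical_three_party_joinability_d_ge_3
    (d : ℕ) (hd : 3 ≤ d)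
    (αAB αAC αBC : ℝ) (hAB : αAB ∈ Set.Icc (0 : ℝ) 1) (hAC : αAC ∈ Set.Icc (0 : ℝ) 1)
    (hBC : αBC ∈ Set.Icc (0 : ℝ) 1) :
    ((∃ w : Fin d × Fin d × Fin d → ℝ, Joins d w αAB αAC αBC) ↔
      (-αAB + αAC + αBC ≤ 1 ∧ αAB - αAC + αBC ≤ 1 ∧ αAB + αAC - αBC ≤ 1)) ∧
    {t : ℝ × ℝ × ℝ | ∃ w : Fin d × Fin d × Fin d → ℝ, Joins d w t.1 t.2.1 t.2.2} =
      convexHull ℝ {((1 : ℝ), (1 : ℝ), (1 : ℝ)), ((1 : ℝ), (0 : ℝ), (0 : ℝ)),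
        ((0 : ℝ), (1 : ℝ), (0 : ℝ)), ((0 : ℝ), (0 : ℝ), (1 : ℝ)),
        ((0 : ℝ), (0 : ℝ), (0 : ℝ))} := by
  constructor
  · constructor
    · rintro ⟨w, hw⟩
      exact joins_ineqs hd hw
    · rintro ⟨e1, e2, e3⟩
      exact exists_joins hd hAB.1 hAC.1 hBC.1 e1 e2 e3
  · set P : Set (ℝ × ℝ × ℝ) := {((1 : ℝ), (1 : ℝ), (1 : ℝ)), ((1 : ℝ), (0 : ℝ), (0 : ℝ)),
        ((0 : ℝ), (1 : ℝ), (0 : ℝ)), ((0 : ℝ), (0 : ℝ), (1 : ℝ)),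
        ((0 : ℝ), (0 : ℝ), (0 : ℝ))} with hP
    apply Set.Subset.antisymm
    · rintro ⟨x, y, z⟩ ⟨w, hw⟩
      obtain ⟨hx, hy, hz⟩ := joins_bounds hd hw
      obtain ⟨e1, e2, e3⟩ := joins_ineqs hd hw
      obtain ⟨l0, l1, l2, l3, l4, h0, h1, h2, h3, h4, hs, hhx, hhy, hhz⟩ :=
        exists_weights x y z hx.1 hy.1 hz.1 e1 e2 e3
      have hconv : Convex ℝ (convexHull ℝ P) := convex_convexHull ℝ P
      have key := hconv.sum_mem (t := (Finset.univ : Finset (Fin 5)))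
        (w := ![l0, l1, l2, l3, l4])
        (z := ![((1 : ℝ), (1 : ℝ), (1 : ℝ)), ((1 : ℝ), (0 : ℝ), (0 : ℝ)),
          ((0 : ℝ), (1 : ℝ), (0 : ℝ)), ((0 : ℝ), (0 : ℝ), (1 : ℝ)),
          ((0 : ℝ), (0 : ℝ), (0 : ℝ))])
        (fun i _ => by fin_cases i <;> simpa using ‹_›)
        (by simp [Fin.sum_univ_five]; linarith)
        (fun i _ => by
          fin_cases i <;>
            exact subset_convexHull ℝ P (by simp [hP]))
      have heq : (∑ i : Fin 5, ![l0, l1, l2, l3, l4] i •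
          ![((1 : ℝ), (1 : ℝ), (1 : ℝ)), ((1 : ℝ), (0 : ℝ), (0 : ℝ)),
            ((0 : ℝ), (1 : ℝ), (0 : ℝ)), ((0 : ℝ), (0 : ℝ), (1 : ℝ)),
            ((0 : ℝ), (0 : ℝ), (0 : ℝ))] i) = ((x, y, z) : ℝ × ℝ × ℝ) := by
        simp [Fin.sum_univ_five, Prod.ext_iff]
        refine ⟨by linarith, by linarith, by linarith⟩
      rw [heq] at key
      exact key
    · apply convexHull_min
      · rintro p hp
        simp only [hP, Set.mem_insert_iff, Set.mem_singleton_iff] at hp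
        rcases hp with rfl | rfl | rfl | rfl | rfl
        · have hj := joins_combo hd 1 0 0 0 0 (by norm_num) (by norm_num) (by norm_num) (by norm_num) (by norm_num) (by norm_num)
          norm_num at hj
          exact ⟨_, hj⟩
        · have hj := joins_combo hd 0 1 0 0 0 (by norm_num) (by norm_num) (by norm_num) (by norm_num) (by norm_num) (by norm_num)
          norm_num at hj
          exact ⟨_, hj⟩
        · have hj := joins_combo hd 0 0 1 0 0 (by norm_num) (by norm_num) (by norm_num) (by norm_num) (by norm_num) (by norm_num)
          norm_num at hj
          exact ⟨_, hj⟩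
        · have hj := joins_combo hd 0 0 0 1 0 (by norm_num) (by norm_num) (by norm_num) (by norm_num) (by norm_num) (by norm_num)
          norm_num at hj
          exact ⟨_, hj⟩
        · have hj := joins_combo hd 0 0 0 0 1 (by norm_num) (by norm_num) (by norm_num) (by norm_num) (by norm_num) (by norm_num)
          norm_num at hj
          exact ⟨_, hj⟩
      · rintro p hp q hq s t hs ht hst
        obtain ⟨w1, hw1⟩ := hp
        obtain ⟨w2, hw2⟩ := hq
        refine ⟨fun u => s * w1 u + t * w2 u, ?_⟩
        have := joins_mix hs ht hst hw1 hw2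
        simpa [Prod.fst_add, Prod.snd_add, Prod.smul_fst, Prod.smul_snd, smul_eq_mul]
          using this
end
end
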